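/- arXiv:1207.3519 — 5 statements merged into one kernel-verified Lean document; each statement's English description precedes it below -/
import Mathlib

section
/- Let g be a real-valued random variable on a probability space (Ω, P) with E[g] = 0 satisfying the tail bound P(|g| ≥ ρ) ≤ C₀·exp(−c₀·ρ^γ) for all ρ ≥ 0, with constants C₀, c₀ > 0 and exponent γ ∈ (1, 2]. Then there exists a constant c > 0 depending only on C₀, c₀ and γ such that for every t ∈ ℝ: E[exp(t·g)] ≤ exp(c·t²) if |t| ≤ 1, and E[exp(t·g)] ≤ exp(c·|t|^{γ/(γ−1)}) if |t| ≥ 1. -/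
open MeasureTheory

open Real Set

private lemma aux_exp_taylor (x : ℝ) : Real.exp x - 1 - x ≤ x ^ 2 * Real.exp |x| := by
  rcases le_or_gt 0 x with hx | hx
  · rw [abs_of_nonneg hx]
    have h1 := Real.add_one_le_exp (-x)
    have h2 : Real.exp (-x) * Real.exp x = 1 := by rw [← Real.exp_add]; simp
    nlinarith [Real.exp_pos x, Real.exp_pos (-x), mul_nonneg hx hx]
  · rw [abs_of_neg hx]
    have h1 := Real.add_one_le_exp (-x)
    have h2 := Real.add_one_le_exp x
    have h3 : Real.exp x * Real.exp (-x) = 1 := by rw [← Real.exp_add]; simp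
    have h4 : 1 ≤ Real.exp (-x) := Real.one_le_exp (by linarith)
    nlinarith [Real.exp_pos (-x), Real.exp_pos x]

private lemma aux_sq_le (x : ℝ) (hx : 0 ≤ x) : x ^ 2 ≤ 4 * Real.exp x := by
  have h1 := Real.add_one_le_exp (x / 2)
  have h2 : Real.exp (x / 2) * Real.exp (x / 2) = Real.exp x := by
    rw [← Real.exp_add]; ring_nf
  nlinarith [Real.exp_pos (x / 2)]

private lemma aux_young (c₀ γ : ℝ) (hc₀ : 0 < c₀) (hγ1 : 1 < γ) :
    ∃ K : ℝ, 0 < K ∧ ∀ s u : ℝ, 0 ≤ s → 0 ≤ u →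
      u * s ≤ c₀ / 2 * s ^ γ + K * u ^ (γ / (γ - 1)) := by
  have hγ0 : (0:ℝ) < γ := by linarith
  set q := γ / (γ - 1) with hqdef
  have hpq : γ.HolderConjugate q := Real.HolderConjugate.conjExponent hγ1
  have hq1 : 1 < q := hpq.symm.lt
  set l : ℝ := (c₀ * γ / 2) ^ (1/γ) with hldef
  have hlpos : 0 < l := Real.rpow_pos_of_pos (by positivity) _
  refine ⟨(1/l) ^ q, Real.rpow_pos_of_pos (by positivity) _, fun s u hs hu => ?_⟩
  have hy := Real.young_inequality_of_nonneg (mul_nonneg hlpos.le hs)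
    (div_nonneg hu hlpos.le) hpq
  have h1 : l * s * (u / l) = u * s := by field_simp
  have hlγ : l ^ γ = c₀ * γ / 2 := by
    rw [hldef, ← Real.rpow_mul (by positivity), one_div, inv_mul_cancel₀ hγ0.ne',
      Real.rpow_one]
  have h2 : (l * s) ^ γ / γ = c₀ / 2 * s ^ γ := by
    rw [Real.mul_rpow hlpos.le hs, hlγ]; field_simp
  have h3 : (u / l) ^ q / q ≤ (1/l) ^ q * u ^ q := by
    rw [div_eq_mul_one_div u l, Real.mul_rpow hu (by positivity)]
    rw [div_le_iff₀ (by linarith)]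
    have h4 : (0:ℝ) ≤ u ^ q * (1/l) ^ q := by positivity
    nlinarith [h4]
  calc u * s = l * s * (u / l) := h1.symm
    _ ≤ (l * s) ^ γ / γ + (u / l) ^ q / q := hy
    _ ≤ c₀ / 2 * s ^ γ + (1/l) ^ q * u ^ q := by rw [h2]; linarith

private lemma aux_lintegral (C₀ c₀ γ : ℝ) (hC₀ : 0 < C₀) (hc₀ : 0 < c₀) (hγ0 : 0 < γ)
    (Ω : Type) [MeasurableSpace Ω] (μ : Measure Ω) [IsProbabilityMeasure μ]
    (g : Ω → ℝ) (hg : Measurable g)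
    (htail : ∀ ρ : ℝ, 0 ≤ ρ →
      μ {ω | ρ ≤ |g ω|} ≤ ENNReal.ofReal (C₀ * Real.exp (-c₀ * ρ ^ γ))) :
    ∫⁻ ω, ENNReal.ofReal (Real.exp (c₀ / 2 * |g ω| ^ γ)) ∂μ ≤ ENNReal.ofReal (1 + C₀) := by
  set Y : Ω → ℝ := fun ω => c₀ / 2 * |g ω| ^ γ with hYdef
  have hYm : Measurable Y :=
    ((Real.continuous_rpow_const hγ0.le).measurable.comp hg.abs).const_mul _
  have hYnn : ∀ ω, 0 ≤ Y ω := fun ω => by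
    have : (0:ℝ) ≤ |g ω| ^ γ := Real.rpow_nonneg (abs_nonneg _) _
    positivity
  have key := lintegral_comp_eq_lintegral_meas_le_mul (f := Y) (g := Real.exp) μ
    (ae_of_all _ hYnn) hYm.aemeasurable
    (fun t _ => intervalIntegral.intervalIntegrable_exp)
    (ae_of_all _ fun t => (Real.exp_pos t).le)
  have hIexp : ∀ ω, (∫ t in (0:ℝ)..Y ω, Real.exp t) = Real.exp (Y ω) - 1 := by
    intro ω; rw [integral_exp, Real.exp_zero]
  have hsplit : ∀ ω, ENNReal.ofReal (Real.exp (Y ω)) =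
      ENNReal.ofReal (Real.exp (Y ω) - 1) + 1 := by
    intro ω
    have h1 : (1:ℝ) ≤ Real.exp (Y ω) := Real.one_le_exp (hYnn ω)
    rw [← ENNReal.ofReal_one, ← ENNReal.ofReal_add (by linarith) zero_le_one]
    norm_num
  have hintOn : IntegrableOn (fun t : ℝ => C₀ * Real.exp (-t)) (Ioi (0:ℝ)) := by
    have h := exp_neg_integrableOn_Ioi (0:ℝ) (one_pos)
    simp only [neg_mul, one_mul] at h
    exact h.const_mul C₀
  calc ∫⁻ ω, ENNReal.ofReal (Real.exp (Y ω)) ∂μ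
      = ∫⁻ ω, (ENNReal.ofReal (Real.exp (Y ω) - 1) + 1) ∂μ :=
        lintegral_congr fun ω => hsplit ω
    _ = (∫⁻ ω, ENNReal.ofReal (Real.exp (Y ω) - 1) ∂μ) + 1 := by
        rw [lintegral_add_right _ measurable_const]; simp
    _ = (∫⁻ t in Ioi (0:ℝ), μ {a | t ≤ Y a} * ENNReal.ofReal (Real.exp t)) + 1 := by
        rw [← key]; congr 1; exact lintegral_congr fun ω => by rw [hIexp ω]
    _ ≤ (∫⁻ t in Ioi (0:ℝ), ENNReal.ofReal (C₀ * Real.exp (-t))) + 1 := by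
        refine add_le_add_left ?_ 1
        refine lintegral_mono_ae ((ae_restrict_iff' measurableSet_Ioi).2
          (ae_of_all _ fun t ht => ?_))
        have ht0 : (0:ℝ) < t := ht
        set ρ : ℝ := (2 * t / c₀) ^ γ⁻¹ with hρdef
        have hρnn : 0 ≤ ρ := Real.rpow_nonneg (by positivity) _
        have hsub : {a | t ≤ Y a} ⊆ {a | ρ ≤ |g a|} := by
          intro a ha
          simp only [Set.mem_setOf_eq, hYdef] at ha ⊢
          have h1 : 2 * t / c₀ ≤ |g a| ^ γ := by
            rw [div_le_iff₀ hc₀]; nlinarith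
          calc ρ ≤ (|g a| ^ γ) ^ γ⁻¹ :=
                Real.rpow_le_rpow (by positivity) h1 (by positivity)
            _ = |g a| := Real.rpow_rpow_inv (abs_nonneg _) hγ0.ne'
        have hργ : ρ ^ γ = 2 * t / c₀ := Real.rpow_inv_rpow (by positivity) hγ0.ne'
        have hexpeq : -c₀ * ρ ^ γ = -2 * t := by rw [hργ]; field_simp
        calc μ {a | t ≤ Y a} * ENNReal.ofReal (Real.exp t)
            ≤ ENNReal.ofReal (C₀ * Real.exp (-2 * t)) * ENNReal.ofReal (Real.exp t) := by
              gcongr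
              calc μ {a | t ≤ Y a} ≤ μ {a | ρ ≤ |g a|} := measure_mono hsub
                _ ≤ ENNReal.ofReal (C₀ * Real.exp (-c₀ * ρ ^ γ)) := htail ρ hρnn
                _ = ENNReal.ofReal (C₀ * Real.exp (-2 * t)) := by rw [hexpeq]
          _ = ENNReal.ofReal (C₀ * Real.exp (-t)) := by
              rw [← ENNReal.ofReal_mul (by positivity), mul_assoc, ← Real.exp_add]
              ring_nf
    _ = ENNReal.ofReal C₀ + 1 := by
        rw [← ofReal_integral_eq_lintegral_ofReal hintOn
          (ae_of_all _ fun t => by positivity)]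
        rw [integral_const_mul, integral_exp_neg_Ioi_zero, mul_one]
    _ = ENNReal.ofReal (1 + C₀) := by
        rw [← ENNReal.ofReal_one, ← ENNReal.ofReal_add hC₀.le zero_le_one, add_comm]

/-- For a centered random variable with a stretched-exponential tail bound of exponent
`γ ∈ (1,2]`, one has `E[exp(tg)] ≤ exp(c t²)` for `|t| ≤ 1` and
`E[exp(tg)] ≤ exp(c |t|^{γ/(γ-1)})` for `|t| ≥ 1`. -/
theorem stmt_8 (C₀ c₀ γ : ℝ) (hC₀ : 0 < C₀) (hc₀ : 0 < c₀) (hγ1 : 1 < γ) (hγ2 : γ ≤ 2) :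
    ∃ c : ℝ, 0 < c ∧
      ∀ (Ω : Type) (_ : MeasurableSpace Ω) (μ : Measure Ω), IsProbabilityMeasure μ →
        ∀ g : Ω → ℝ, Measurable g → Integrable g μ → (∫ ω, g ω ∂μ) = 0 →
          (∀ ρ : ℝ, 0 ≤ ρ →
            μ {ω | ρ ≤ |g ω|} ≤ ENNReal.ofReal (C₀ * Real.exp (-c₀ * ρ ^ γ))) →
          ∀ t : ℝ,
            (|t| ≤ 1 → ∫ ω, Real.exp (t * g ω) ∂μ ≤ Real.exp (c * t ^ 2)) ∧
            (1 ≤ |t| →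
              ∫ ω, Real.exp (t * g ω) ∂μ ≤ Real.exp (c * |t| ^ (γ / (γ - 1)))) := by
  have hγ0 : (0:ℝ) < γ := by linarith
  obtain ⟨K, hK, hyoung⟩ := aux_young c₀ γ hc₀ hγ1
  set q : ℝ := γ / (γ - 1) with hqdef
  have hq1 : 1 < q := (Real.HolderConjugate.conjExponent hγ1).symm.lt
  set M : ℝ := 1 + C₀ with hMdef
  have hM1 : 1 < M := by simp [hMdef]; linarith
  have hM0 : 0 < M := by linarith
  set B : ℝ := 4 * Real.exp (K * 2 ^ q) * M with hBdef
  have hB0 : 0 < B := by positivity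
  refine ⟨B + K + Real.log M + 1, by have h := Real.log_pos hM1; linarith, ?_⟩
  intro Ω mΩ μ hμprob g hgm hgint hgmean htail t
  set c : ℝ := B + K + Real.log M + 1 with hcdef
  have hlogM : 0 < Real.log M := Real.log_pos hM1
  -- the dominating function
  set E : Ω → ℝ := fun ω => Real.exp (c₀ / 2 * |g ω| ^ γ) with hEdef
  have hYm : Measurable fun ω => c₀ / 2 * |g ω| ^ γ :=
    ((Real.continuous_rpow_const hγ0.le).measurable.comp hgm.abs).const_mul _
  have hEm : Measurable E := Real.measurable_exp.comp hYm
  have hlint := aux_lintegral C₀ c₀ γ hC₀ hc₀ hγ0 Ω μ g hgm htail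
  have hEnn : ∀ ω, 0 ≤ E ω := fun ω => (Real.exp_pos _).le
  have hEint : Integrable E μ := by
    refine ⟨hEm.aestronglyMeasurable, ?_⟩
    rw [hasFiniteIntegral_iff_ofReal (ae_of_all _ hEnn)]
    exact lt_of_le_of_lt hlint ENNReal.ofReal_lt_top
  have hEle : ∫ ω, E ω ∂μ ≤ M := by
    rw [integral_eq_lintegral_of_nonneg_ae (ae_of_all _ hEnn) hEm.aestronglyMeasurable]
    calc (∫⁻ ω, ENNReal.ofReal (E ω) ∂μ).toReal
        ≤ (ENNReal.ofReal (1 + C₀)).toReal :=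
          ENNReal.toReal_mono ENNReal.ofReal_ne_top hlint
      _ = M := ENNReal.toReal_ofReal (by linarith)
  -- pointwise Young bound
  have hkey : ∀ (u : ℝ), 0 ≤ u → ∀ ω,
      Real.exp (u * |g ω|) ≤ Real.exp (K * u ^ q) * E ω := by
    intro u hu ω
    rw [hEdef, ← Real.exp_add]
    exact Real.exp_le_exp.2 (by
      have := hyoung (|g ω|) u (abs_nonneg _) hu
      linarith)
  constructor
  · -- small t
    intro ht
    set φ : Ω → ℝ := fun ω => Real.exp (t * g ω) - 1 - t * g ω with hφdef
    have hφnn : ∀ ω, 0 ≤ φ ω := fun ω => by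
      have := Real.add_one_le_exp (t * g ω); simp only [hφdef]; linarith
    have hφle : ∀ ω, φ ω ≤ t ^ 2 * (4 * Real.exp (K * 2 ^ q)) * E ω := by
      intro ω
      have h1 : φ ω ≤ (t * g ω) ^ 2 * Real.exp |t * g ω| := aux_exp_taylor _
      have h2 : |t * g ω| ≤ |g ω| := by
        rw [abs_mul]
        calc |t| * |g ω| ≤ 1 * |g ω| := by
              exact mul_le_mul_of_nonneg_right ht (abs_nonneg _)
          _ = |g ω| := one_mul _
      have h3 : (t * g ω) ^ 2 ≤ t ^ 2 * (4 * Real.exp |g ω|) := by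
        have hsq : (g ω) ^ 2 ≤ 4 * Real.exp |g ω| := by
          have := aux_sq_le |g ω| (abs_nonneg _)
          calc (g ω) ^ 2 = |g ω| ^ 2 := (sq_abs _).symm
            _ ≤ 4 * Real.exp |g ω| := this
        calc (t * g ω) ^ 2 = t ^ 2 * (g ω) ^ 2 := by ring
          _ ≤ t ^ 2 * (4 * Real.exp |g ω|) :=
              mul_le_mul_of_nonneg_left hsq (sq_nonneg t)
      have h4 : Real.exp (2 * |g ω|) ≤ Real.exp (K * 2 ^ q) * E ω :=
        hkey 2 (by norm_num) ω
      have h5 : (t * g ω) ^ 2 * Real.exp |t * g ω|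
          ≤ t ^ 2 * (4 * Real.exp |g ω|) * Real.exp |g ω| := by
        have he : Real.exp |t * g ω| ≤ Real.exp |g ω| := Real.exp_le_exp.2 h2
        have := mul_le_mul h3 he (Real.exp_pos _).le (by positivity)
        linarith
      have h6 : Real.exp |g ω| * Real.exp |g ω| = Real.exp (2 * |g ω|) := by
        rw [← Real.exp_add]; ring_nf
      calc φ ω ≤ (t * g ω) ^ 2 * Real.exp |t * g ω| := h1
        _ ≤ t ^ 2 * (4 * Real.exp |g ω|) * Real.exp |g ω| := h5
        _ = t ^ 2 * 4 * Real.exp (2 * |g ω|) := by rw [← h6]; ring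
        _ ≤ t ^ 2 * 4 * (Real.exp (K * 2 ^ q) * E ω) := by
            exact mul_le_mul_of_nonneg_left h4 (by positivity)
        _ = t ^ 2 * (4 * Real.exp (K * 2 ^ q)) * E ω := by ring
    have hφm : Measurable φ :=
      ((Real.measurable_exp.comp (hgm.const_mul t)).sub measurable_const).sub
        (hgm.const_mul t)
    have hφint : Integrable φ μ := by
      refine Integrable.mono' ((hEint.const_mul (t ^ 2 * (4 * Real.exp (K * 2 ^ q)))))
        hφm.aestronglyMeasurable (ae_of_all _ fun ω => ?_)
      rw [Real.norm_of_nonneg (hφnn ω)]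
      exact hφle ω
    have hrewrite : (fun ω => Real.exp (t * g ω))
        = fun ω => φ ω + (1 + t * g ω) := by
      funext ω; simp only [hφdef]; ring
    have haux_int : Integrable (fun ω => 1 + t * g ω) μ :=
      (integrable_const 1).add (hgint.const_mul t)
    have hexp_int : Integrable (fun ω => Real.exp (t * g ω)) μ := by
      rw [hrewrite]; exact hφint.add haux_int
    have hφint_le : ∫ ω, φ ω ∂μ ≤ t ^ 2 * (4 * Real.exp (K * 2 ^ q)) * M := by
      calc ∫ ω, φ ω ∂μ
          ≤ ∫ ω, t ^ 2 * (4 * Real.exp (K * 2 ^ q)) * E ω ∂μ :=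
            integral_mono hφint (hEint.const_mul _) hφle
        _ = t ^ 2 * (4 * Real.exp (K * 2 ^ q)) * ∫ ω, E ω ∂μ := integral_const_mul _ _
        _ ≤ t ^ 2 * (4 * Real.exp (K * 2 ^ q)) * M := by
            exact mul_le_mul_of_nonneg_left hEle (by positivity)
    have hsum : ∫ ω, Real.exp (t * g ω) ∂μ = (∫ ω, φ ω ∂μ) + 1 := by
      rw [hrewrite, integral_add hφint haux_int, integral_add (integrable_const 1)
        (hgint.const_mul t), integral_const_mul, hgmean, integral_const]
      simp
    have hBt : t ^ 2 * (4 * Real.exp (K * 2 ^ q)) * M ≤ B * t ^ 2 := by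
      rw [hBdef]; ring_nf; exact le_refl _
    calc ∫ ω, Real.exp (t * g ω) ∂μ = (∫ ω, φ ω ∂μ) + 1 := hsum
      _ ≤ B * t ^ 2 + 1 := by linarith
      _ ≤ Real.exp (B * t ^ 2) := by
          have := Real.add_one_le_exp (B * t ^ 2); linarith
      _ ≤ Real.exp (c * t ^ 2) := Real.exp_le_exp.2 (by
          have : B * t ^ 2 ≤ c * t ^ 2 := by
            apply mul_le_mul_of_nonneg_right _ (sq_nonneg t)
            rw [hcdef]; linarith
          linarith)
  · -- large t
    intro ht
    have htq : 1 ≤ |t| ^ q := Real.one_le_rpow ht (by linarith)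
    have hb : ∀ ω, Real.exp (t * g ω) ≤ Real.exp (K * |t| ^ q) * E ω := by
      intro ω
      calc Real.exp (t * g ω) ≤ Real.exp (|t| * |g ω|) := by
            apply Real.exp_le_exp.2
            calc t * g ω ≤ |t * g ω| := le_abs_self _
              _ = |t| * |g ω| := abs_mul _ _
        _ ≤ Real.exp (K * |t| ^ q) * E ω := hkey |t| (abs_nonneg _) ω
    have hexp_int : Integrable (fun ω => Real.exp (t * g ω)) μ := by
      refine Integrable.mono' (hEint.const_mul (Real.exp (K * |t| ^ q)))
        (Real.measurable_exp.comp (hgm.const_mul t)).aestronglyMeasurable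
        (ae_of_all _ fun ω => ?_)
      rw [Real.norm_of_nonneg (Real.exp_pos _).le]
      exact hb ω
    calc ∫ ω, Real.exp (t * g ω) ∂μ
        ≤ ∫ ω, Real.exp (K * |t| ^ q) * E ω ∂μ :=
          integral_mono hexp_int (hEint.const_mul _) hb
      _ = Real.exp (K * |t| ^ q) * ∫ ω, E ω ∂μ := integral_const_mul _ _
      _ ≤ Real.exp (K * |t| ^ q) * M :=
          mul_le_mul_of_nonneg_left hEle (Real.exp_pos _).le
      _ = Real.exp (K * |t| ^ q + Real.log M) := by
          rw [Real.exp_add, Real.exp_log hM0]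
      _ ≤ Real.exp (c * |t| ^ q) := Real.exp_le_exp.2 (by
          have h1 : Real.log M ≤ Real.log M * |t| ^ q := by
            nlinarith
          have h2 : 0 ≤ (B + 1) * |t| ^ q := by positivity
          rw [hcdef]; nlinarith)
end

section
/- Let (g_n)_{n ∈ ℕ} be a sequence of independent real-valued random variables on a probability space (Ω, P), each with E[g_n] = 0 and each satisfying the tail bound P(|g_n| ≥ ρ) ≤ C₀·exp(−c₀·ρ^γ) for all ρ ≥ 0, with common constants C₀, c₀ > 0 and exponent γ ∈ (1, 2]. Then there exist constants C, c > 0 depending only on C₀, c₀ and γ such that for every finitely supported sequence (c_n) of real numbers, not all zero, and every ρ ≥ 0: P( |Σ_n c_n·g_n| ≥ ρ ) ≤ C·exp( −c·(ρ/‖c‖_{ℓ²})^γ ), where ‖c‖_{ℓ²} = (Σ_n c_n²)^{1/2}. -/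
open MeasureTheory ProbabilityTheory

open Real Set Filter
open scoped ENNReal

section Stmt9Aux

lemma aux_exp_prod (v : ℝ) : exp v * exp (-v) = 1 := by
  rw [← Real.exp_add]; simp

lemma aux_key (v : ℝ) : exp v - 1 ≤ v * exp v := by
  nlinarith [mul_le_mul_of_nonneg_left (add_one_le_exp (-v)) (exp_nonneg v),
    aux_exp_prod v]

-- pointwise: exp u ≤ 1 + u + u² exp|u|
lemma aux_exp_le (u : ℝ) : exp u ≤ 1 + u + u ^ 2 * exp |u| := by
  rcases le_or_gt 0 u with hu | hu
  · rw [abs_of_nonneg hu]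
    nlinarith [aux_key u, mul_le_mul_of_nonneg_left (aux_key u) hu]
  · rw [abs_of_neg hu]
    have h1 : exp u * (1 + (-u)) ≤ 1 := by
      nlinarith [mul_le_mul_of_nonneg_left (add_one_le_exp (-u)) (exp_nonneg u),
        aux_exp_prod u]
    have h2 : (1:ℝ) ≤ (1 + u + u^2) * (1 + (-u)) := by nlinarith
    have h3 : (1:ℝ) ≤ exp (-u) := by
      rw [Real.one_le_exp_iff]; linarith
    nlinarith [sq_nonneg u, exp_pos u]

-- e^y ≥ y²/4 for y ≥ 0
lemma aux_exp_ge_sq {y : ℝ} (hy : 0 ≤ y) : y ^ 2 / 4 ≤ exp y := by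
  have h := add_one_le_exp (y / 2)
  have h2 : exp (y/2) * exp (y/2) = exp y := by rw [← Real.exp_add]; ring_nf
  nlinarith [exp_nonneg (y/2)]

-- x² ≤ B exp(β x^γ) for x ≥ 0
lemma aux_sq_le_s9 {β γ : ℝ} (hβ : 0 < β) (hγ1 : 1 < γ) {x : ℝ} (hx : 0 ≤ x) :
    x ^ 2 ≤ (1 + 4 / β ^ 2) * exp (β * x ^ γ) := by
  have hB : (1:ℝ) ≤ 1 + 4 / β ^ 2 := by
    have : 0 < 4 / β ^ 2 := by positivity
    linarith
  have hexp1 : (1:ℝ) ≤ exp (β * x ^ γ) := by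
    rw [Real.one_le_exp_iff]
    positivity
  rcases le_or_gt x 1 with hx1 | hx1
  · have : x ^ 2 ≤ 1 := by nlinarith
    nlinarith
  · -- x > 1 : x² ≤ x^(2γ) ≤ (4/β²) exp(βx^γ)
    have h1 : x ^ (2:ℝ) ≤ x ^ (2 * γ) := by
      apply Real.rpow_le_rpow_of_exponent_le hx1.le
      nlinarith
    have h2 : x ^ (2:ℝ) = x ^ 2 := by
      rw [show (2:ℝ) = ((2:ℕ):ℝ) by norm_num, Real.rpow_natCast]
    have h3 : x ^ (2 * γ) = (x ^ γ) ^ 2 := by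
      rw [show 2 * γ = γ * 2 by ring, Real.rpow_mul hx,
        show (2:ℝ) = ((2:ℕ):ℝ) by norm_num, Real.rpow_natCast]
    have h4 : (β * x ^ γ) ^ 2 / 4 ≤ exp (β * x ^ γ) := by
      apply aux_exp_ge_sq; positivity
    have h5 : (x ^ γ) ^ 2 ≤ (4 / β ^ 2) * exp (β * x ^ γ) := by
      rw [div_mul_eq_mul_div, le_div_iff₀ (by positivity : (0:ℝ) < β ^ 2)]
      nlinarith [sq_nonneg (x ^ γ)]
    calc x ^ 2 = x ^ (2:ℝ) := h2.symm
      _ ≤ x ^ (2*γ) := h1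
      _ = (x ^ γ) ^ 2 := h3
      _ ≤ (4 / β^2) * exp (β * x ^ γ) := h5
      _ ≤ (1 + 4 / β^2) * exp (β * x ^ γ) := by nlinarith

-- Young: |s| x ≤ A |s|^γ' + c x^γ
lemma aux_young_s9 {γ γ' c : ℝ} (hγ1 : 1 < γ) (hconj : γ.HolderConjugate γ') (hc : 0 < c) :
    ∃ A : ℝ, 0 < A ∧ ∀ s x : ℝ, 0 ≤ x → |s| * x ≤ A * |s| ^ γ' + c * x ^ γ := by
  have hγ'pos : 0 < γ' := hconj.symm.pos
  have hγpos : 0 < γ := hconj.pos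
  set δ : ℝ := (γ * c) ^ (1/γ) with hδdef
  have hδ : 0 < δ := by apply Real.rpow_pos_of_pos; positivity
  refine ⟨(δ⁻¹) ^ γ' / γ', by positivity, fun s x hx => ?_⟩
  have h := Real.young_inequality_of_nonneg
    (by positivity : (0:ℝ) ≤ |s| / δ) (by positivity : (0:ℝ) ≤ δ * x) hconj.symm
  have hδγ : δ ^ γ = γ * c := by
    rw [hδdef, ← Real.rpow_mul (by positivity), one_div, inv_mul_cancel₀ hγpos.ne',
      Real.rpow_one]
  have e1 : |s| / δ * (δ * x) = |s| * x := by field_simp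
  have e2 : (|s| / δ) ^ γ' = (δ⁻¹) ^ γ' * |s| ^ γ' := by
    rw [div_eq_mul_inv, Real.mul_rpow (abs_nonneg s) (by positivity), mul_comm]
  have e3 : (δ * x) ^ γ = δ ^ γ * x ^ γ := Real.mul_rpow hδ.le hx
  rw [e1, e2, e3, hδγ] at h
  calc |s| * x ≤ δ⁻¹ ^ γ' * |s| ^ γ' / γ' + γ * c * x ^ γ / γ := h
    _ = δ⁻¹ ^ γ' / γ' * |s| ^ γ' + c * x ^ γ := by field_simp

lemma aux_lintegral_exp {Ω : Type} [MeasurableSpace Ω] (μ : Measure Ω) [IsProbabilityMeasure μ]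
    {X : Ω → ℝ} (hX : Measurable X) {C₀ c₀ γ : ℝ} (hC₀ : 0 < C₀) (hc₀ : 0 < c₀) (hγ : 0 < γ)
    (htail : ∀ ρ : ℝ, 0 ≤ ρ → μ {ω | ρ ≤ |X ω|} ≤ ENNReal.ofReal (C₀ * exp (-c₀ * ρ ^ γ))) :
    ∫⁻ ω, ENNReal.ofReal (exp ((c₀/2) * |X ω| ^ γ)) ∂μ ≤ ENNReal.ofReal (1 + C₀) := by
  set f : Ω → ℝ := fun ω => exp ((c₀/2) * |X ω| ^ γ) with hf
  have hf_meas : Measurable f :=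
    (((Real.continuous_rpow_const hγ.le).measurable.comp hX.abs).const_mul _).exp
  rw [lintegral_eq_lintegral_meas_le μ (Eventually.of_forall fun ω => (exp_pos _).le)
    hf_meas.aemeasurable]
  have hsplit : Ioi (0:ℝ) = Ioc (0:ℝ) 1 ∪ Ioi 1 := (Ioc_union_Ioi_eq_Ioi zero_le_one).symm
  rw [hsplit, lintegral_union measurableSet_Ioi Ioc_disjoint_Ioi_same]
  have h1 : ∫⁻ t in Ioc (0:ℝ) 1, μ {a | t ≤ f a} ≤ 1 := by
    calc ∫⁻ t in Ioc (0:ℝ) 1, μ {a | t ≤ f a}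
        ≤ ∫⁻ _ in Ioc (0:ℝ) 1, 1 := by
          exact setLIntegral_mono' measurableSet_Ioc fun t _ => prob_le_one
      _ = 1 := by simp [Real.volume_Ioc]
  have h2 : ∫⁻ t in Ioi (1:ℝ), μ {a | t ≤ f a} ≤ ENNReal.ofReal C₀ := by
    have hbound : ∀ t ∈ Ioi (1:ℝ), μ {a | t ≤ f a} ≤ ENNReal.ofReal (C₀ * t ^ (-2:ℝ)) := by
      intro t ht
      have ht1 : (1:ℝ) < t := ht
      have hlog : 0 ≤ Real.log t := Real.log_nonneg ht1.le
      set ρ : ℝ := ((2/c₀) * Real.log t) ^ (1/γ) with hρ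
      have hρ0 : 0 ≤ ρ := Real.rpow_nonneg (by positivity) _
      have hsub : {a | t ≤ f a} ⊆ {ω | ρ ≤ |X ω|} := by
        intro ω hω
        simp only [mem_setOf_eq] at hω ⊢
        have h' : Real.log t ≤ (c₀/2) * |X ω| ^ γ := by
          calc Real.log t ≤ Real.log (f ω) := Real.log_le_log (by linarith) hω
            _ = (c₀/2) * |X ω| ^ γ := Real.log_exp _
        have h'' : (2/c₀) * Real.log t ≤ |X ω| ^ γ := by
          rw [div_mul_eq_mul_div, div_le_iff₀ hc₀] at *
          nlinarith [h']
        calc ρ ≤ (|X ω| ^ γ) ^ (1/γ) :=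
              Real.rpow_le_rpow (by positivity) h'' (by positivity)
          _ = |X ω| := by
              rw [← Real.rpow_mul (abs_nonneg _), mul_one_div, div_self hγ.ne', Real.rpow_one]
      have hρpow : ρ ^ γ = (2/c₀) * Real.log t := by
        rw [hρ, ← Real.rpow_mul (by positivity), one_div, inv_mul_cancel₀ hγ.ne',
          Real.rpow_one]
      calc μ {a | t ≤ f a} ≤ μ {ω | ρ ≤ |X ω|} := measure_mono hsub
        _ ≤ ENNReal.ofReal (C₀ * exp (-c₀ * ρ ^ γ)) := htail ρ hρ0
        _ = ENNReal.ofReal (C₀ * t ^ (-2:ℝ)) := by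
            congr 1
            rw [hρpow, Real.rpow_def_of_pos (by linarith : (0:ℝ) < t)]
            congr 1
            field_simp
    calc ∫⁻ t in Ioi (1:ℝ), μ {a | t ≤ f a}
        ≤ ∫⁻ t in Ioi (1:ℝ), ENNReal.ofReal (C₀ * t ^ (-2:ℝ)) :=
          setLIntegral_mono' measurableSet_Ioi hbound
      _ = ENNReal.ofReal (∫ t in Ioi (1:ℝ), C₀ * t ^ (-2:ℝ)) := by
          rw [← ofReal_integral_eq_lintegral_ofReal]
          · exact (integrableOn_Ioi_rpow_of_lt (by norm_num) one_pos).const_mul C₀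
          · filter_upwards [ae_restrict_mem measurableSet_Ioi] with t ht
            have : (0:ℝ) < t := lt_trans one_pos ht
            positivity
      _ = ENNReal.ofReal C₀ := by
          rw [integral_const_mul, integral_Ioi_rpow_of_lt (by norm_num) one_pos]
          norm_num
  calc _ ≤ (1 : ℝ≥0∞) + ENNReal.ofReal C₀ := add_le_add h1 h2
    _ = ENNReal.ofReal (1 + C₀) := by
        rw [ENNReal.ofReal_add zero_le_one hC₀.le, ENNReal.ofReal_one]

lemma aux_mgf_le {Ω : Type} [MeasurableSpace Ω] {μ : Measure Ω} [IsProbabilityMeasure μ]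
    {X : Ω → ℝ} (hX : Measurable X) {C₀ c₀ γ γ' A : ℝ}
    (hC₀ : 0 < C₀) (hc₀ : 0 < c₀) (hγ1 : 1 < γ) (hconj : γ.HolderConjugate γ')
    (hA : 0 < A) (hyoung : ∀ s x : ℝ, 0 ≤ x → |s| * x ≤ A * |s| ^ γ' + (c₀/4) * x ^ γ)
    (htail : ∀ ρ : ℝ, 0 ≤ ρ → μ {ω | ρ ≤ |X ω|} ≤ ENNReal.ofReal (C₀ * exp (-c₀ * ρ ^ γ)))
    (hint : Integrable X μ) (hzero : ∫ ω, X ω ∂μ = 0) :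
    (∀ s : ℝ, Integrable (fun ω => exp (s * X ω)) μ) ∧
    (∀ s : ℝ, mgf X μ s ≤
      exp ((max ((1 + 4/(c₀/4)^2) * exp A * (1 + C₀)) (A + Real.log (1 + C₀))) * s^2 +
        (max ((1 + 4/(c₀/4)^2) * exp A * (1 + C₀)) (A + Real.log (1 + C₀))) * |s| ^ γ')) := by
  have hγpos : 0 < γ := hconj.pos
  have hγ'pos : 0 < γ' := hconj.symm.pos
  set B : ℝ := 1 + 4/(c₀/4)^2 with hBdef
  have hB : 0 < B := by positivity
  set K₁ : ℝ := B * exp A * (1 + C₀) with hK₁def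
  have hK₁ : 0 < K₁ := by positivity
  set K₂ : ℝ := A + Real.log (1 + C₀) with hK₂def
  have hK₂ : 0 < K₂ := by
    have : 0 ≤ Real.log (1 + C₀) := Real.log_nonneg (by linarith)
    linarith
  set K : ℝ := max K₁ K₂ with hKdef
  have hK : 0 < K := lt_max_of_lt_left hK₁
  -- base integrable function
  have hbase_meas : Measurable fun ω => exp ((c₀/2) * |X ω| ^ γ) :=
    (((Real.continuous_rpow_const hγpos.le).measurable.comp hX.abs).const_mul _).exp
  have hbase : Integrable (fun ω => exp ((c₀/2) * |X ω| ^ γ)) μ := by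
    refine ⟨hbase_meas.aestronglyMeasurable, ?_⟩
    rw [hasFiniteIntegral_iff_ofReal (Eventually.of_forall fun ω => (exp_pos _).le)]
    exact lt_of_le_of_lt (aux_lintegral_exp μ hX hC₀ hc₀ hγpos htail) ENNReal.ofReal_lt_top
  have hbase_bd : ∫ ω, exp ((c₀/2) * |X ω| ^ γ) ∂μ ≤ 1 + C₀ := by
    rw [integral_eq_lintegral_of_nonneg_ae (Eventually.of_forall fun ω => (exp_pos _).le)
      hbase.aestronglyMeasurable]
    exact ENNReal.toReal_le_of_le_ofReal (by linarith)
      (aux_lintegral_exp μ hX hC₀ hc₀ hγpos htail)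
  have hbase_nonneg : 0 ≤ ∫ ω, exp ((c₀/2) * |X ω| ^ γ) ∂μ :=
    integral_nonneg fun ω => (exp_pos _).le
  -- pointwise domination
  have hdom : ∀ (s : ℝ) (ω : Ω), exp (s * X ω) ≤
      exp (A * |s| ^ γ') * exp ((c₀/2) * |X ω| ^ γ) := by
    intro s ω
    rw [← Real.exp_add]
    apply Real.exp_le_exp.mpr
    have h1 : s * X ω ≤ |s| * |X ω| := by
      calc s * X ω ≤ |s * X ω| := le_abs_self _
        _ = |s| * |X ω| := abs_mul _ _
    have h2 := hyoung s (|X ω|) (abs_nonneg _)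
    have h3 : (c₀/4) * |X ω| ^ γ ≤ (c₀/2) * |X ω| ^ γ := by
      have : (0:ℝ) ≤ |X ω| ^ γ := Real.rpow_nonneg (abs_nonneg _) _
      nlinarith
    linarith
  have hint_exp : ∀ s : ℝ, Integrable (fun ω => exp (s * X ω)) μ := by
    intro s
    refine (hbase.const_mul (exp (A * |s| ^ γ'))).mono'
      ((hX.const_mul s).exp.aestronglyMeasurable) (Eventually.of_forall fun ω => ?_)
    rw [Real.norm_eq_abs, Real.abs_exp]
    exact hdom s ω
  refine ⟨hint_exp, fun s => ?_⟩
  rcases le_or_gt 1 |s| with hs | hs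
  · -- large s
    have h1 : mgf X μ s ≤ exp (A * |s| ^ γ') * (1 + C₀) := by
      unfold mgf
      calc ∫ ω, exp (s * X ω) ∂μ
          ≤ ∫ ω, exp (A * |s| ^ γ') * exp ((c₀/2) * |X ω| ^ γ) ∂μ :=
            integral_mono (hint_exp s) (hbase.const_mul _) (hdom s)
        _ = exp (A * |s| ^ γ') * ∫ ω, exp ((c₀/2) * |X ω| ^ γ) ∂μ := integral_const_mul _ _
        _ ≤ exp (A * |s| ^ γ') * (1 + C₀) := by
            exact mul_le_mul_of_nonneg_left hbase_bd (exp_nonneg _)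
    have h2 : exp (A * |s| ^ γ') * (1 + C₀) = exp (A * |s| ^ γ' + Real.log (1 + C₀)) := by
      rw [Real.exp_add, Real.exp_log (by linarith)]
    have hs1 : (1:ℝ) ≤ |s| ^ γ' := by
      calc (1:ℝ) = 1 ^ γ' := (Real.one_rpow _).symm
        _ ≤ |s| ^ γ' := Real.rpow_le_rpow zero_le_one hs hγ'pos.le
    have h3 : A * |s| ^ γ' + Real.log (1 + C₀) ≤ K * s^2 + K * |s| ^ γ' := by
      have hlog : 0 ≤ Real.log (1 + C₀) := Real.log_nonneg (by linarith)
      have : A * |s| ^ γ' + Real.log (1 + C₀) ≤ K₂ * |s| ^ γ' := by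
        rw [hK₂def, add_mul]
        have := mul_le_mul_of_nonneg_left hs1 hlog
        linarith
      have hKK : K₂ * |s| ^ γ' ≤ K * |s| ^ γ' :=
        mul_le_mul_of_nonneg_right (le_max_right _ _) (by positivity)
      nlinarith [mul_nonneg hK.le (sq_nonneg s)]
    calc mgf X μ s ≤ exp (A * |s| ^ γ' + Real.log (1 + C₀)) := h2 ▸ h1
      _ ≤ exp (K * s^2 + K * |s| ^ γ') := Real.exp_le_exp.mpr h3
  · -- small s
    have hsle : |s| ^ γ' ≤ 1 := Real.rpow_le_one (abs_nonneg _) hs.le hγ'pos.le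
    -- pointwise: exp (s X) ≤ 1 + s X + s² * (B e^A exp((c₀/2)|X|^γ))
    have hpt : ∀ ω, exp (s * X ω) ≤
        1 + s * X ω + s^2 * (B * exp A * exp ((c₀/2) * |X ω| ^ γ)) := by
      intro ω
      refine le_trans (aux_exp_le (s * X ω)) ?_
      have hsq : (s * X ω)^2 = s^2 * X ω^2 := by ring
      have hX2 : X ω ^ 2 ≤ B * exp ((c₀/4) * |X ω| ^ γ) := by
        have := aux_sq_le_s9 (by positivity : (0:ℝ) < c₀/4) hγ1 (abs_nonneg (X ω))
        calc X ω ^ 2 = |X ω| ^ 2 := (sq_abs _).symm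
          _ ≤ B * exp ((c₀/4) * |X ω| ^ γ) := this
      have hexp : exp |s * X ω| ≤ exp A * exp ((c₀/4) * |X ω| ^ γ) := by
        rw [← Real.exp_add]
        apply Real.exp_le_exp.mpr
        have h2 := hyoung s (|X ω|) (abs_nonneg _)
        have h3 : A * |s| ^ γ' ≤ A := by
          nlinarith
        calc |s * X ω| = |s| * |X ω| := abs_mul _ _
          _ ≤ A * |s| ^ γ' + (c₀/4) * |X ω| ^ γ := h2
          _ ≤ A + (c₀/4) * |X ω| ^ γ := by linarith
      have hprod : X ω ^ 2 * exp |s * X ω| ≤ B * exp A * exp ((c₀/2) * |X ω| ^ γ) := by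
        calc X ω ^ 2 * exp |s * X ω|
            ≤ (B * exp ((c₀/4) * |X ω| ^ γ)) * (exp A * exp ((c₀/4) * |X ω| ^ γ)) := by
              apply mul_le_mul hX2 hexp (exp_nonneg _) (by positivity)
          _ = B * exp A * (exp ((c₀/4) * |X ω| ^ γ) * exp ((c₀/4) * |X ω| ^ γ)) := by ring
          _ = B * exp A * exp ((c₀/2) * |X ω| ^ γ) := by
              rw [← Real.exp_add]; ring_nf
      have : (s * X ω)^2 * exp |s * X ω| ≤ s^2 * (B * exp A * exp ((c₀/2) * |X ω| ^ γ)) := by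
        rw [hsq, mul_assoc]
        exact mul_le_mul_of_nonneg_left hprod (sq_nonneg s)
      linarith
    have hrhs_int : Integrable (fun ω =>
        1 + s * X ω + s^2 * (B * exp A * exp ((c₀/2) * |X ω| ^ γ))) μ := by
      exact ((integrable_const 1).add (hint.const_mul s)).add
        (((hbase.const_mul (B * exp A)).const_mul (s^2)).congr
          (Eventually.of_forall fun ω => by ring))
    have hmgf1 : mgf X μ s ≤ 1 + s^2 * (B * exp A * (1 + C₀)) := by
      unfold mgf
      calc ∫ ω, exp (s * X ω) ∂μ
          ≤ ∫ ω, (1 + s * X ω + s^2 * (B * exp A * exp ((c₀/2) * |X ω| ^ γ))) ∂μ :=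
            integral_mono (hint_exp s) hrhs_int hpt
        _ = (∫ ω, (1 + s * X ω) ∂μ) +
            ∫ ω, s^2 * (B * exp A * exp ((c₀/2) * |X ω| ^ γ)) ∂μ :=
            integral_add ((integrable_const 1).add (hint.const_mul s))
              (((hbase.const_mul (B * exp A)).const_mul (s^2)).congr
                (Eventually.of_forall fun ω => by ring))
        _ = ((∫ _ω, (1:ℝ) ∂μ) + (∫ ω, s * X ω ∂μ)) +
            ∫ ω, s^2 * (B * exp A * exp ((c₀/2) * |X ω| ^ γ)) ∂μ := by
            rw [integral_add (integrable_const 1) (hint.const_mul s)]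
        _ = 1 + s * ∫ ω, X ω ∂μ + s^2 * (B * exp A * ∫ ω, exp ((c₀/2) * |X ω| ^ γ) ∂μ) := by
            rw [integral_const]
            simp [integral_const_mul]
        _ = 1 + s^2 * (B * exp A * ∫ ω, exp ((c₀/2) * |X ω| ^ γ) ∂μ) := by
            rw [hzero]; ring
        _ ≤ 1 + s^2 * (B * exp A * (1 + C₀)) := by
            have : B * exp A * ∫ ω, exp ((c₀/2) * |X ω| ^ γ) ∂μ ≤ B * exp A * (1 + C₀) :=
              mul_le_mul_of_nonneg_left hbase_bd (by positivity)
            nlinarith [sq_nonneg s]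
    calc mgf X μ s ≤ 1 + K₁ * s^2 := by rw [hK₁def]; linarith [hmgf1]
      _ ≤ exp (K₁ * s^2) := by linarith [add_one_le_exp (K₁ * s^2)]
      _ ≤ exp (K * s^2 + K * |s| ^ γ') := by
          apply Real.exp_le_exp.mpr
          have h1 : K₁ * s^2 ≤ K * s^2 :=
            mul_le_mul_of_nonneg_right (le_max_left _ _) (sq_nonneg s)
          have h2 : 0 ≤ K * |s| ^ γ' := mul_nonneg hK.le (by positivity)
          linarith

lemma aux_gamma'_ge_two {γ γ' : ℝ} (hγ1 : 1 < γ) (hγ2 : γ ≤ 2)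
    (hconj : γ.HolderConjugate γ') : 2 ≤ γ' := by
  nlinarith [hconj.mul_eq_add, sub_pos.mpr hγ1]

lemma aux_sum_rpow_le {γ' : ℝ} (hγ'2 : 2 ≤ γ') (F : Finset ℕ) (cs : ℕ → ℝ)
    (hσ : 0 < Real.sqrt (∑ n ∈ F, cs n ^ 2)) :
    ∑ n ∈ F, |cs n| ^ γ' ≤ Real.sqrt (∑ n ∈ F, cs n ^ 2) ^ γ' := by
  set σ := Real.sqrt (∑ n ∈ F, cs n ^ 2) with hσdef
  have hsum_nonneg : 0 ≤ ∑ n ∈ F, cs n ^ 2 := Finset.sum_nonneg fun n _ => sq_nonneg _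
  have hσ2 : σ ^ 2 = ∑ n ∈ F, cs n ^ 2 := Real.sq_sqrt hsum_nonneg
  have hpt : ∀ n ∈ F, |cs n| ^ γ' ≤ cs n ^ 2 * σ ^ (γ' - 2) := by
    intro n hn
    have hcsle : |cs n| ≤ σ := by
      rw [hσdef, ← Real.sqrt_sq_eq_abs]
      exact Real.sqrt_le_sqrt (Finset.single_le_sum (fun i _ => sq_nonneg (cs i)) hn)
    rcases eq_or_ne (cs n) 0 with h0 | h0
    · rw [h0]
      rw [abs_zero, Real.zero_rpow (by linarith : γ' ≠ 0)]
      positivity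
    · have habs : 0 < |cs n| := abs_pos.mpr h0
      calc |cs n| ^ γ' = |cs n| ^ (2:ℝ) * |cs n| ^ (γ' - 2) := by
            rw [← Real.rpow_add habs]; ring_nf
        _ ≤ cs n ^ 2 * σ ^ (γ' - 2) := by
            rw [show |cs n| ^ (2:ℝ) = |cs n| ^ (2:ℕ) by
              rw [← Real.rpow_natCast]; norm_num, sq_abs]
            exact mul_le_mul_of_nonneg_left
              (Real.rpow_le_rpow (abs_nonneg _) hcsle (by linarith)) (sq_nonneg _)
  calc ∑ n ∈ F, |cs n| ^ γ' ≤ ∑ n ∈ F, cs n ^ 2 * σ ^ (γ' - 2) := Finset.sum_le_sum hpt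
    _ = (∑ n ∈ F, cs n ^ 2) * σ ^ (γ' - 2) := by rw [← Finset.sum_mul]
    _ = σ ^ (2:ℝ) * σ ^ (γ' - 2) := by
        rw [show σ ^ (2:ℝ) = σ ^ (2:ℕ) by rw [← Real.rpow_natCast]; norm_num, hσ2]
    _ = σ ^ γ' := by rw [← Real.rpow_add hσ]; ring_nf

lemma aux_onesided {Ω : Type} [MeasurableSpace Ω] {μ : Measure Ω} [IsProbabilityMeasure μ]
    {g : ℕ → Ω → ℝ} (hmeas : ∀ n, Measurable (g n))
    (hindep : iIndepFun g μ)
    {γ γ' K ε : ℝ} (hγ1 : 1 < γ) (hγ2 : γ ≤ 2) (hconj : γ.HolderConjugate γ')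
    (hK : 0 < K) (hε : 0 < ε) (hε1 : ε ≤ 1) (hεK : ε ≤ 1/(4*K))
    (hint_exp : ∀ (n : ℕ) (s : ℝ), Integrable (fun ω => exp (s * g n ω)) μ)
    (hmgf : ∀ (n : ℕ) (s : ℝ), mgf (g n) μ s ≤ exp (K * s^2 + K * |s| ^ γ'))
    (F : Finset ℕ) (cs : ℕ → ℝ) (hσ : 0 < Real.sqrt (∑ n ∈ F, cs n ^ 2))
    {ρ : ℝ} (hx : 1 ≤ ρ / Real.sqrt (∑ n ∈ F, cs n ^ 2)) :
    (μ {ω | ρ ≤ ∑ n ∈ F, cs n * g n ω}).toReal ≤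
      exp (-(ε/2) * (ρ / Real.sqrt (∑ n ∈ F, cs n ^ 2)) ^ γ) := by
  have hγpos : 0 < γ := hconj.pos
  have hγ'pos : 0 < γ' := hconj.symm.pos
  have hγ'2 : 2 ≤ γ' := aux_gamma'_ge_two hγ1 hγ2 hconj
  set σ : ℝ := Real.sqrt (∑ n ∈ F, cs n ^ 2) with hσdef
  set x : ℝ := ρ / σ with hxdef
  have hxpos : 0 < x := lt_of_lt_of_le one_pos hx
  have hρ : ρ = x * σ := by rw [hxdef, div_mul_cancel₀ _ hσ.ne']
  set t : ℝ := ε * x ^ (γ - 1) / σ with htdef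
  have hxpow_pos : 0 < x ^ (γ - 1) := Real.rpow_pos_of_pos hxpos _
  have ht : 0 < t := by positivity
  have htσ : t * σ = ε * x ^ (γ - 1) := by rw [htdef, div_mul_cancel₀ _ hσ.ne']
  -- the scaled variables
  set Y : ℕ → Ω → ℝ := fun n => fun ω => cs n * g n ω with hYdef
  have hYmeas : ∀ n, Measurable (Y n) := fun n => (hmeas n).const_mul (cs n)
  have hYindep : iIndepFun Y μ :=
    hindep.comp (fun n => fun v => cs n * v) (fun n => measurable_const_mul (cs n))
  have hYint : ∀ n ∈ F, Integrable (fun ω => exp (t * Y n ω)) μ := by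
    intro n _
    have := hint_exp n (t * cs n)
    simpa [hYdef, mul_assoc] using this
  have hchernoff := measure_ge_le_exp_mul_mgf (μ := μ) (X := ∑ n ∈ F, Y n) ρ ht.le
    (iIndepFun.integrable_exp_mul_sum hYindep hYmeas hYint)
  have hset : {ω | ρ ≤ ∑ n ∈ F, cs n * g n ω} = {ω | ρ ≤ (∑ n ∈ F, Y n) ω} := by
    ext ω; simp [hYdef, Finset.sum_apply]
  -- mgf bound for the sum
  have hmgfYn : ∀ n, mgf (Y n) μ t = mgf (g n) μ (t * cs n) := by
    intro n
    simp only [mgf, hYdef]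
    congr 1
    ext ω
    rw [mul_assoc]
  have hmgf_sum : mgf (∑ n ∈ F, Y n) μ t ≤ exp (K * t^2 * σ^2 + K * (t * σ) ^ γ') := by
    rw [hYindep.mgf_sum hYmeas F]
    have hsum_nonneg : 0 ≤ ∑ n ∈ F, cs n ^ 2 := Finset.sum_nonneg fun n _ => sq_nonneg _
    have hσ2 : σ ^ 2 = ∑ n ∈ F, cs n ^ 2 := Real.sq_sqrt hsum_nonneg
    calc ∏ n ∈ F, mgf (Y n) μ t
        ≤ ∏ n ∈ F, exp (K * (t * cs n)^2 + K * |t * cs n| ^ γ') := by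
          refine Finset.prod_le_prod (fun n _ => mgf_nonneg) (fun n _ => ?_)
          rw [hmgfYn n]
          exact hmgf n (t * cs n)
      _ = exp (∑ n ∈ F, (K * (t * cs n)^2 + K * |t * cs n| ^ γ')) := (Real.exp_sum F _).symm
      _ ≤ exp (K * t^2 * σ^2 + K * (t * σ) ^ γ') := by
          apply Real.exp_le_exp.mpr
          rw [Finset.sum_add_distrib]
          have e1 : ∑ n ∈ F, K * (t * cs n)^2 = K * t^2 * σ^2 := by
            rw [hσ2, Finset.mul_sum]
            apply Finset.sum_congr rfl
            intro n _
            ring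
          have e2 : ∑ n ∈ F, K * |t * cs n| ^ γ' ≤ K * (t * σ) ^ γ' := by
            have habs : ∀ n, |t * cs n| ^ γ' = t ^ γ' * |cs n| ^ γ' := by
              intro n
              rw [abs_mul, abs_of_pos ht, Real.mul_rpow ht.le (abs_nonneg _)]
            calc ∑ n ∈ F, K * |t * cs n| ^ γ'
                = K * t ^ γ' * ∑ n ∈ F, |cs n| ^ γ' := by
                  rw [Finset.mul_sum]
                  exact Finset.sum_congr rfl fun n _ => by rw [habs n]; ring
              _ ≤ K * t ^ γ' * σ ^ γ' :=
                  mul_le_mul_of_nonneg_left (aux_sum_rpow_le hγ'2 F cs hσ) (by positivity)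
              _ = K * (t * σ) ^ γ' := by
                  rw [Real.mul_rpow ht.le (Real.sqrt_nonneg _)]; ring
          linarith [e1.le, e2]
    -- final arithmetic
  have harith : -t * ρ + (K * t^2 * σ^2 + K * (t * σ) ^ γ') ≤ -(ε/2) * x ^ γ := by
    have hxγ : 0 < x ^ γ := Real.rpow_pos_of_pos hxpos _
    have hxx : x ^ (γ - 1) * x = x ^ γ := by
      rw [← Real.rpow_add_one hxpos.ne' (γ - 1)]
      norm_num
    have h1 : t * ρ = ε * x ^ γ := by
      rw [hρ, show t * (x * σ) = (t * σ) * x by ring, htσ, mul_assoc, hxx]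
    have hxp2 : (x ^ (γ - 1))^2 = x ^ (2*γ - 2) := by
      rw [sq, ← Real.rpow_add hxpos]
      congr 1
      ring
    have h2 : t^2 * σ^2 = ε^2 * x ^ (2*γ - 2) := by
      rw [show t^2 * σ^2 = (t*σ)^2 by ring, htσ, mul_pow, hxp2]
    have h3 : x ^ (2*γ - 2) ≤ x ^ γ :=
      Real.rpow_le_rpow_of_exponent_le hx (by linarith)
    have h4 : (t * σ) ^ γ' = ε ^ γ' * x ^ γ := by
      rw [htσ, Real.mul_rpow hε.le (Real.rpow_nonneg hxpos.le _),
        ← Real.rpow_mul hxpos.le]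
      congr 2
      nlinarith [hconj.mul_eq_add]
    have h5 : ε ^ γ' ≤ ε^2 := by
      calc ε ^ γ' ≤ ε ^ (2:ℝ) := Real.rpow_le_rpow_of_exponent_ge hε hε1 hγ'2
        _ = ε^2 := by rw [← Real.rpow_natCast ε 2]; norm_num
    have hKε : K * ε^2 ≤ ε/4 := by
      have h6 : ε * (4*K) ≤ 1 := (le_div_iff₀ (by positivity)).mp hεK
      nlinarith [mul_le_mul_of_nonneg_left h6 hε.le]
    have c1 : K * t^2 * σ^2 ≤ (ε/4) * x ^ γ := by
      rw [mul_assoc, h2]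
      calc K * (ε^2 * x ^ (2*γ-2)) ≤ K * (ε^2 * x ^ γ) := by
            apply mul_le_mul_of_nonneg_left _ hK.le
            exact mul_le_mul_of_nonneg_left h3 (sq_nonneg _)
        _ = (K * ε^2) * x ^ γ := by ring
        _ ≤ (ε/4) * x ^ γ := mul_le_mul_of_nonneg_right hKε hxγ.le
    have c2 : K * (t * σ) ^ γ' ≤ (ε/4) * x ^ γ := by
      rw [h4]
      calc K * (ε ^ γ' * x ^ γ) ≤ K * (ε^2 * x ^ γ) := by
            apply mul_le_mul_of_nonneg_left _ hK.le
            exact mul_le_mul_of_nonneg_right h5 hxγ.le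
        _ = (K * ε^2) * x ^ γ := by ring
        _ ≤ (ε/4) * x ^ γ := mul_le_mul_of_nonneg_right hKε hxγ.le
    have : -t * ρ = -(ε * x ^ γ) := by rw [neg_mul, h1]
    rw [this]
    linarith
  rw [hset]
  calc (μ {ω | ρ ≤ (∑ n ∈ F, Y n) ω}).toReal
      ≤ exp (-t * ρ) * mgf (∑ n ∈ F, Y n) μ t := hchernoff
    _ ≤ exp (-t * ρ) * exp (K * t^2 * σ^2 + K * (t * σ) ^ γ') :=
        mul_le_mul_of_nonneg_left hmgf_sum (exp_nonneg _)
    _ = exp (-t * ρ + (K * t^2 * σ^2 + K * (t * σ) ^ γ')) := (Real.exp_add _ _).symm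
    _ ≤ exp (-(ε/2) * x ^ γ) := Real.exp_le_exp.mpr harith

end Stmt9Aux

/-- Concentration for linear combinations of independent centered random variables with
a common stretched-exponential tail bound of exponent `γ ∈ (1,2]`:
`P(|∑ cₙ gₙ| ≥ ρ) ≤ C exp(-c (ρ/‖c‖_{ℓ²})^γ)`. -/
theorem stmt_9 (C₀ c₀ γ : ℝ) (hC₀ : 0 < C₀) (hc₀ : 0 < c₀) (hγ1 : 1 < γ) (hγ2 : γ ≤ 2) :
    ∃ C c : ℝ, 0 < C ∧ 0 < c ∧
      ∀ (Ω : Type) (_ : MeasurableSpace Ω) (μ : Measure Ω), IsProbabilityMeasure μ →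
        ∀ g : ℕ → Ω → ℝ, (∀ n, Measurable (g n)) →
          iIndepFun g μ →
          (∀ n, Integrable (g n) μ) → (∀ n, (∫ ω, g n ω ∂μ) = 0) →
          (∀ n, ∀ ρ : ℝ, 0 ≤ ρ →
            μ {ω | ρ ≤ |g n ω|} ≤ ENNReal.ofReal (C₀ * Real.exp (-c₀ * ρ ^ γ))) →
          ∀ (F : Finset ℕ) (cs : ℕ → ℝ), (∃ n ∈ F, cs n ≠ 0) →
            ∀ ρ : ℝ, 0 ≤ ρ →
              μ {ω | ρ ≤ |∑ n ∈ F, cs n * g n ω|} ≤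
                ENNReal.ofReal (C * Real.exp
                  (-c * (ρ / Real.sqrt (∑ n ∈ F, cs n ^ 2)) ^ γ)) := by
  have hγpos : (0:ℝ) < γ := lt_trans one_pos hγ1
  set γ' : ℝ := γ / (γ - 1) with hγ'def
  have hconj : γ.HolderConjugate γ' := Real.HolderConjugate.conjExponent hγ1
  obtain ⟨A, hA, hyoung⟩ := aux_young_s9 hγ1 hconj (show (0:ℝ) < c₀/4 by positivity)
  set K : ℝ := max ((1 + 4/(c₀/4)^2) * exp A * (1 + C₀)) (A + Real.log (1 + C₀)) with hKdef
  have hKpos : 0 < K := lt_max_of_lt_left (by positivity)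
  set ε : ℝ := min 1 (1/(4*K)) with hεdef
  have hεpos : 0 < ε := lt_min one_pos (by positivity)
  refine ⟨2 * exp (ε/2), ε/2, by positivity, by positivity, ?_⟩
  intro Ω mΩ μ hμ g hgmeas hgindep hgint hgzero hgtail F cs hcs ρ hρ
  have hsum_pos : 0 < ∑ n ∈ F, cs n ^ 2 := by
    obtain ⟨n, hn, h0⟩ := hcs
    exact Finset.sum_pos' (fun i _ => sq_nonneg _) ⟨n, hn, by positivity⟩
  have hσ : 0 < Real.sqrt (∑ n ∈ F, cs n ^ 2) := Real.sqrt_pos.mpr hsum_pos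
  set σ : ℝ := Real.sqrt (∑ n ∈ F, cs n ^ 2) with hσdef
  set x : ℝ := ρ / σ with hxdef
  have hxnn : 0 ≤ x := div_nonneg hρ hσ.le
  have hxγnn : 0 ≤ x ^ γ := Real.rpow_nonneg hxnn _
  have hmgf_all := fun n => aux_mgf_le (μ := μ) (hgmeas n) hC₀ hc₀ hγ1 hconj hA hyoung
    (hgtail n) (hgint n) (hgzero n)
  rcases lt_or_ge x 1 with hx | hx
  · -- small x : trivial bound
    have hxγ : x ^ γ ≤ 1 := Real.rpow_le_one hxnn hx.le hγpos.le
    have hrhs : 1 ≤ 2 * exp (ε/2) * exp (-(ε/2) * x ^ γ) := by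
      rw [mul_assoc, ← Real.exp_add]
      have : 0 ≤ ε/2 + -(ε/2) * x ^ γ := by nlinarith
      nlinarith [Real.one_le_exp_iff.mpr this]
    calc μ {ω | ρ ≤ |∑ n ∈ F, cs n * g n ω|} ≤ 1 := prob_le_one
      _ = ENNReal.ofReal 1 := ENNReal.ofReal_one.symm
      _ ≤ ENNReal.ofReal (2 * exp (ε/2) * exp (-(ε/2) * x ^ γ)) :=
          ENNReal.ofReal_le_ofReal hrhs
  · -- large x
    have hε1 : ε ≤ 1 := min_le_left _ _
    have hεK : ε ≤ 1/(4*K) := min_le_right _ _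
    have hone := aux_onesided hgmeas hgindep hγ1 hγ2 hconj hKpos hεpos hε1 hεK
      (fun n s => (hmgf_all n).1 s) (fun n s => (hmgf_all n).2 s) F cs hσ hx
    have hneg : ∑ n ∈ F, (-cs n) ^ 2 = ∑ n ∈ F, cs n ^ 2 := by simp
    have hσ' : 0 < Real.sqrt (∑ n ∈ F, (-cs n) ^ 2) := by rw [hneg]; exact hσ
    have hx' : 1 ≤ ρ / Real.sqrt (∑ n ∈ F, (-cs n) ^ 2) := by rw [hneg]; exact hx
    have hone' := aux_onesided hgmeas hgindep hγ1 hγ2 hconj hKpos hεpos hε1 hεK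
      (fun n s => (hmgf_all n).1 s) (fun n s => (hmgf_all n).2 s) F (fun n => -cs n) hσ' hx'
    rw [hneg] at hone'
    have hsub : {ω | ρ ≤ |∑ n ∈ F, cs n * g n ω|} ⊆
        {ω | ρ ≤ ∑ n ∈ F, cs n * g n ω} ∪ {ω | ρ ≤ ∑ n ∈ F, (-cs n) * g n ω} := by
      intro ω hω
      simp only [mem_setOf_eq, mem_union] at hω ⊢
      rcases abs_cases (∑ n ∈ F, cs n * g n ω) with ⟨h, _⟩ | ⟨h, _⟩
      · left; linarith [hω]
      · right
        have : ∑ n ∈ F, (-cs n) * g n ω = -∑ n ∈ F, cs n * g n ω := by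
          rw [← Finset.sum_neg_distrib]
          exact Finset.sum_congr rfl fun n _ => by ring
        rw [this]
        linarith [hω]
    have hbd : ∀ (ds : ℕ → ℝ), (μ {ω | ρ ≤ ∑ n ∈ F, ds n * g n ω}).toReal ≤
        exp (-(ε/2) * x ^ γ) → μ {ω | ρ ≤ ∑ n ∈ F, ds n * g n ω} ≤
        ENNReal.ofReal (exp (-(ε/2) * x ^ γ)) := by
      intro ds h
      exact (ENNReal.le_ofReal_iff_toReal_le (measure_ne_top μ _) (exp_nonneg _)).mpr h
    calc μ {ω | ρ ≤ |∑ n ∈ F, cs n * g n ω|}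
        ≤ μ ({ω | ρ ≤ ∑ n ∈ F, cs n * g n ω} ∪ {ω | ρ ≤ ∑ n ∈ F, (-cs n) * g n ω}) :=
          measure_mono hsub
      _ ≤ μ {ω | ρ ≤ ∑ n ∈ F, cs n * g n ω} + μ {ω | ρ ≤ ∑ n ∈ F, (-cs n) * g n ω} :=
          measure_union_le _ _
      _ ≤ ENNReal.ofReal (exp (-(ε/2) * x ^ γ)) + ENNReal.ofReal (exp (-(ε/2) * x ^ γ)) :=
          add_le_add (hbd cs hone) (hbd (fun n => -cs n) hone')
      _ = ENNReal.ofReal (2 * exp (-(ε/2) * x ^ γ)) := by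
          rw [← ENNReal.ofReal_add (exp_nonneg _) (exp_nonneg _)]
          ring_nf
      _ ≤ ENNReal.ofReal (2 * exp (ε/2) * exp (-(ε/2) * x ^ γ)) := by
          apply ENNReal.ofReal_le_ofReal
          have h1 : (1:ℝ) ≤ exp (ε/2) := Real.one_le_exp_iff.mpr (by positivity)
          nlinarith [exp_nonneg (-(ε/2) * x ^ γ)]
end

section
/- Let p ≥ 1 be an integer and let (X_n)_{n ∈ ℕ} be a sequence of independent real-valued random variables on a probability space (Ω, P) such that E[X_n] = 0 for every n and each X_n has finite moments of all orders up to 2p. Let (n_1, …, n_{2p}) ∈ ℕ^{2p}. If E[ X_{n_1}·X_{n_2}·⋯·X_{n_{2p}} ] ≠ 0, then there exists a permutation σ of {1, …, 2p} such that σ has no fixed point, every cycle of σ has length 2 or 3, and n_{σ(i)} = n_i for every i ∈ {1, …, 2p}. -/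
open MeasureTheory ProbabilityTheory

lemma small_support_cycleType {α : Type*} [Fintype α] [DecidableEq α] {σ : Equiv.Perm α}
    (h : σ.support.card ≤ 3) {k : ℕ} (hk : k ∈ σ.cycleType) : k = 2 ∨ k = 3 := by
  have h2 := Equiv.Perm.two_le_of_mem_cycleType hk
  have h3 : k ≤ σ.cycleType.sum := Multiset.single_le_sum (fun x _ => Nat.zero_le x) k hk
  rw [Equiv.Perm.sum_cycleType] at h3
  omega

lemma exists_perm_support_eq {α : Type*} [Fintype α] [DecidableEq α] :
    ∀ s : Finset α, 2 ≤ s.card →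
      ∃ σ : Equiv.Perm α, σ.support = s ∧ ∀ k ∈ σ.cycleType, k = 2 ∨ k = 3 := by
  intro s
  induction s using Finset.strongInduction with
  | _ s ih =>
    intro hs
    obtain ⟨a, ha, b, hb, hab⟩ := Finset.one_lt_card.mp hs
    rcases lt_or_ge s.card 4 with hc | hc
    · -- card is 2 or 3
      rcases Nat.lt_or_ge s.card 3 with hc2 | hc3
      · -- card = 2
        have hcard : s.card = 2 := le_antisymm (by omega) hs
        have hsub : ({a, b} : Finset α) ⊆ s := by
          intro x hx; simp at hx; rcases hx with rfl | rfl <;> assumption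
        have hseq : ({a, b} : Finset α) = s := by
          apply Finset.eq_of_subset_of_card_le hsub
          rw [Finset.card_insert_of_notMem (by simpa using hab), Finset.card_singleton, hcard]
        refine ⟨Equiv.swap a b, ?_, ?_⟩
        · rw [Equiv.Perm.support_swap hab, hseq]
        · intro k hk
          apply small_support_cycleType _ hk
          rw [Equiv.Perm.support_swap hab, hseq, hcard]; omega
      · -- card = 3
        have hcard : s.card = 3 := le_antisymm (by omega) hc3
        obtain ⟨x, y, z, hxy, hxz, hyz, rfl⟩ := Finset.card_eq_three.mp hcard
        refine ⟨Equiv.swap x y * Equiv.swap x z, ?_, ?_⟩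
        · have h3 : (Equiv.swap x y * Equiv.swap x z).IsThreeCycle :=
            Equiv.Perm.isThreeCycle_swap_mul_swap_same hxy hxz hyz
          have hsub : (Equiv.swap x y * Equiv.swap x z).support ⊆ {x, y, z} := by
            refine le_trans (Equiv.Perm.support_mul_le _ _) ?_
            rw [Equiv.Perm.support_swap hxy, Equiv.Perm.support_swap hxz]
            intro w hw; simp at hw ⊢; tauto
          apply Finset.eq_of_subset_of_card_le hsub
          rw [h3.card_support, hcard]
        · intro k hk
          apply small_support_cycleType _ hk
          calc (Equiv.swap x y * Equiv.swap x z).support.card = 3 :=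
                (Equiv.Perm.isThreeCycle_swap_mul_swap_same hxy hxz hyz).card_support
            _ ≤ 3 := le_refl 3
    · -- card ≥ 4 : split off a swap
      have habs : ({a, b} : Finset α) ⊆ s := by
        intro x hx; simp at hx; rcases hx with rfl | rfl <;> assumption
      have hcardab : ({a, b} : Finset α).card = 2 := by
        rw [Finset.card_insert_of_notMem (by simpa using hab), Finset.card_singleton]
      have hssub : s \ {a, b} ⊂ s := by
        apply Finset.sdiff_ssubset habs; simp
      have hcards : 2 ≤ (s \ {a, b}).card := by
        rw [Finset.card_sdiff_of_subset habs, hcardab]; omega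
      obtain ⟨τ, hτsupp, hτcyc⟩ := ih _ hssub hcards
      have hdisj : Equiv.Perm.Disjoint (Equiv.swap a b) τ := by
        rw [Equiv.Perm.disjoint_iff_disjoint_support, Equiv.Perm.support_swap hab, hτsupp]
        exact Finset.disjoint_sdiff
      refine ⟨Equiv.swap a b * τ, ?_, ?_⟩
      · rw [hdisj.support_mul, Equiv.Perm.support_swap hab, hτsupp,
          Finset.union_sdiff_of_subset habs]
      · intro k hk
        rw [hdisj.cycleType_mul, Multiset.mem_add] at hk
        rcases hk with hk | hk
        · left
          have h2 := Equiv.Perm.two_le_of_mem_cycleType hk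
          have h3 : k ≤ (Equiv.swap a b).cycleType.sum :=
            Multiset.single_le_sum (fun x _ => Nat.zero_le x) k hk
          rw [Equiv.Perm.sum_cycleType, Equiv.Perm.card_support_swap hab] at h3
          omega
        · exact hτcyc k hk

lemma exists_perm_fiberwise {α : Type*} [Fintype α] [DecidableEq α] (f : α → ℕ) :
    ∀ s : Finset α, (∀ x ∈ s, 2 ≤ (s.filter (fun y => f y = f x)).card) →
      ∃ σ : Equiv.Perm α, σ.support = s ∧ (∀ x, f (σ x) = f x) ∧
        ∀ k ∈ σ.cycleType, k = 2 ∨ k = 3 := by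
  intro s
  induction s using Finset.strongInduction with
  | _ s ih =>
    intro hfib
    rcases Finset.eq_empty_or_nonempty s with rfl | ⟨x, hx⟩
    · exact ⟨1, by simp, fun _ => rfl, by simp⟩
    · set t := s.filter (fun y => f y = f x) with ht
      have htsub : t ⊆ s := Finset.filter_subset _ _
      have htx : x ∈ t := Finset.mem_filter.mpr ⟨hx, rfl⟩
      obtain ⟨τ, hτsupp, hτcyc⟩ := exists_perm_support_eq t (hfib x hx)
      have hssub : s \ t ⊂ s := by
        apply Finset.sdiff_ssubset htsub ⟨x, htx⟩
      have hfib' : ∀ y ∈ s \ t, 2 ≤ ((s \ t).filter (fun z => f z = f y)).card := by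
        intro y hy
        have hys : y ∈ s := (Finset.mem_sdiff.mp hy).1
        have hyt : y ∉ t := (Finset.mem_sdiff.mp hy).2
        have hfy : f y ≠ f x := fun hh => hyt (Finset.mem_filter.mpr ⟨hys, hh⟩)
        have heq : (s \ t).filter (fun z => f z = f y) = s.filter (fun z => f z = f y) := by
          ext z
          simp only [Finset.mem_filter, Finset.mem_sdiff, ht]
          constructor
          · rintro ⟨⟨hz, _⟩, hfz⟩; exact ⟨hz, hfz⟩
          · rintro ⟨hz, hfz⟩
            exact ⟨⟨hz, fun hzt => hfy (by rw [← hfz]; exact hzt.2)⟩, hfz⟩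
        rw [heq]
        exact hfib y hys
      obtain ⟨σ', hσ'supp, hσ'f, hσ'cyc⟩ := ih _ hssub hfib'
      have hdisj : Equiv.Perm.Disjoint τ σ' := by
        rw [Equiv.Perm.disjoint_iff_disjoint_support, hτsupp, hσ'supp]
        exact Finset.disjoint_sdiff
      refine ⟨τ * σ', ?_, ?_, ?_⟩
      · rw [hdisj.support_mul, hτsupp, hσ'supp, Finset.union_sdiff_of_subset htsub]
      · intro y
        have happ : (τ * σ') y = τ (σ' y) := rfl
        by_cases hyt : y ∈ t
        · have hy' : σ' y = y := by
            rw [← Equiv.Perm.notMem_support, hσ'supp]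
            simp [hyt]
          rw [happ, hy']
          by_cases hτy : τ y = y
          · rw [hτy]
          · have hmem : τ y ∈ t := by
              rw [← hτsupp]
              exact Equiv.Perm.apply_mem_support.mpr (Equiv.Perm.mem_support.mpr hτy)
            have h1 : f (τ y) = f x := (Finset.mem_filter.mp hmem).2
            have h2 : f y = f x := (Finset.mem_filter.mp hyt).2
            rw [h1, h2]
        · by_cases hy' : σ' y = y
          · have hτy : τ y = y := by
              rw [← Equiv.Perm.notMem_support, hτsupp]; exact hyt
            rw [happ, hy', hτy]
          · have hmem : σ' y ∈ s \ t := by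
              rw [← hσ'supp]
              exact Equiv.Perm.apply_mem_support.mpr (Equiv.Perm.mem_support.mpr hy')
            have hτfix : τ (σ' y) = σ' y := by
              rw [← Equiv.Perm.notMem_support, hτsupp]
              exact (Finset.mem_sdiff.mp hmem).2
            rw [happ, hτfix]
            exact hσ'f y
      · intro k hk
        rw [hdisj.cycleType_mul, Multiset.mem_add] at hk
        rcases hk with hk | hk
        · exact hτcyc k hk
        · exact hσ'cyc k hk

/-- If `E[X_{n_1} ⋯ X_{n_{2p}}] ≠ 0` for independent centered random variables with
finite moments up to order `2p`, then there is a fixed-point-free permutation `σ` of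
`{1,…,2p}` whose cycles all have length 2 or 3 such that `n_{σ(i)} = n_i` for all `i`. -/
theorem stmt_12 {Ω : Type} [MeasurableSpace Ω] (μ : Measure Ω) [IsProbabilityMeasure μ]
    (p : ℕ) (hp : 1 ≤ p) (X : ℕ → Ω → ℝ) (hmeas : ∀ n, Measurable (X n))
    (hindep : iIndepFun X μ)
    (hmean : ∀ n, (∫ ω, X n ω ∂μ) = 0)
    (hmom : ∀ n, ∀ k ≤ 2 * p, Integrable (fun ω => |X n ω| ^ k) μ)
    (n : Fin (2 * p) → ℕ)
    (h : (∫ ω, ∏ i, X (n i) ω ∂μ) ≠ 0) :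
    ∃ σ : Equiv.Perm (Fin (2 * p)),
      (∀ i, σ i ≠ i) ∧ (∀ k ∈ σ.cycleType, k = 2 ∨ k = 3) ∧ ∀ i, n (σ i) = n i := by
  classical
  -- Step 1: every value of n is attained at least twice
  have key : ∀ i : Fin (2 * p), 2 ≤ (Finset.univ.filter (fun j => n j = n i)).card := by
    intro i
    by_contra hlt
    push_neg at hlt
    have h1 : 1 ≤ (Finset.univ.filter (fun j => n j = n i)).card :=
      Finset.card_pos.mpr ⟨i, Finset.mem_filter.mpr ⟨Finset.mem_univ i, rfl⟩⟩
    have hka0 : (Finset.univ.filter (fun j => n j = n i)).card = 1 := by omega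
    set k : ℕ → ℕ := fun b => (Finset.univ.filter (fun j => n j = b)).card with hkdef
    have hka : k (n i) = 1 := hka0
    set Y : ℕ → Ω → ℝ := fun b => (fun x => x ^ k b) ∘ X b with hYdef
    have hYmeas : ∀ b, Measurable (Y b) := fun b => ((measurable_id.pow_const _).comp (hmeas b))
    have hYindep : iIndepFun Y μ :=
      hindep.comp (fun b x => x ^ k b) (fun b => measurable_id.pow_const _)
    have ha : n i ∈ Finset.univ.image n :=
      Finset.mem_image.mpr ⟨i, Finset.mem_univ i, rfl⟩
    have hrw : ∀ ω, ∏ j, X (n j) ω =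
        Y (n i) ω * ∏ b ∈ (Finset.univ.image n).erase (n i), Y b ω := by
      intro ω
      calc ∏ j, X (n j) ω = ∏ b ∈ Finset.univ.image n, Y b ω :=
            Finset.prod_comp (fun b => X b ω) n
        _ = Y (n i) ω * ∏ b ∈ (Finset.univ.image n).erase (n i), Y b ω :=
            (Finset.mul_prod_erase _ _ ha).symm
    have hInd : IndepFun (Y (n i)) (∏ b ∈ (Finset.univ.image n).erase (n i), Y b) μ :=
      (hYindep.indepFun_finsetProd_of_notMem hYmeas (Finset.notMem_erase (n i) _)).symm
    have hYa : Y (n i) = X (n i) := by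
      funext ω
      simp [hYdef, hka]
    have hMprod : Measurable (∏ b ∈ (Finset.univ.image n).erase (n i), Y b) := by
      rw [Finset.prod_fn]
      exact Finset.measurable_prod _ (fun b _ => hYmeas b)
    have hmul := hInd.integral_mul_eq_mul_integral (hYmeas (n i)).aestronglyMeasurable
      hMprod.aestronglyMeasurable
    apply h
    calc (∫ ω, ∏ j, X (n j) ω ∂μ)
        = ∫ ω, (Y (n i) * ∏ b ∈ (Finset.univ.image n).erase (n i), Y b) ω ∂μ := by
          apply integral_congr_ae
          filter_upwards with ω
          simp only [Pi.mul_apply, Finset.prod_apply]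
          exact hrw ω
      _ = (∫ ω, Y (n i) ω ∂μ) *
            ∫ ω, (∏ b ∈ (Finset.univ.image n).erase (n i), Y b) ω ∂μ := hmul
      _ = 0 := by rw [hYa, hmean (n i), zero_mul]
  -- Step 2: combinatorial construction
  obtain ⟨σ, hsupp, hf, hcyc⟩ := exists_perm_fiberwise n Finset.univ
    (fun x _ => by simpa using key x)
  refine ⟨σ, fun i => ?_, hcyc, hf⟩
  rw [← Equiv.Perm.mem_support, hsupp]
  exact Finset.mem_univ i
end

section
/- There exists a constant C > 0 such that for every integer p ≥ 1, the number of permutations σ of the set {1, …, 2p} having no fixed point and whose disjoint-cycle decomposition consists only of cycles of length 2 or 3 is at most (C·p)^{4p/3}. -/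
namespace Stmt13Aux

open Equiv Finset

variable {n : ℕ}

/-- Every point lies on a cycle of length 2 or 3. -/
lemma key_fact (σ : Equiv.Perm (Fin n)) (hfp : ∀ i, σ i ≠ i)
    (hct : ∀ k ∈ σ.cycleType, k = 2 ∨ k = 3) (i : Fin n) :
    σ (σ i) = i ∨ σ (σ (σ i)) = i := by
  have hx : σ i ≠ i := hfp i
  have hmem : (σ.cycleOf i).support.card ∈ σ.cycleType := by
    rw [Equiv.Perm.cycleType, Multiset.mem_map]
    exact ⟨σ.cycleOf i,
      by rwa [← Finset.mem_def, Equiv.Perm.cycleOf_mem_cycleFactorsFinset_iff,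
          Equiv.Perm.mem_support], rfl⟩
  have horder : orderOf (σ.cycleOf i) = (σ.cycleOf i).support.card :=
    (Equiv.Perm.isCycle_cycleOf _ hx).orderOf
  have hpow : ∀ k : ℕ, (σ.cycleOf i).support.card = k → (σ ^ k) i = i := by
    intro k hkk
    rw [← Equiv.Perm.cycleOf_pow_apply_self, ← hkk, ← horder, pow_orderOf_eq_one,
      Equiv.Perm.one_apply]
  rcases hct _ hmem with h2 | h3
  · left
    have := hpow 2 h2
    simpa [pow_succ, Equiv.Perm.mul_apply] using this
  · right
    have := hpow 3 h3
    simpa [pow_succ, Equiv.Perm.mul_apply] using this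

/-- `i` is the minimum of its (2- or 3-element) cycle. -/
def isMin (σ : Equiv.Perm (Fin n)) (i : Fin n) : Prop := i ≤ σ i ∧ i ≤ σ (σ i)

instance (σ : Equiv.Perm (Fin n)) : DecidablePred (isMin σ) := fun _ => instDecidableAnd

/-- The set of non-minima. -/
def Bset (σ : Equiv.Perm (Fin n)) : Finset (Fin n) :=
  Finset.univ.filter fun i => ¬ isMin σ i

/-- The partial-function encoding of `σ`. -/
def fenc (σ : Equiv.Perm (Fin n)) : Fin n → Option (Fin n) :=
  fun i => if isMin σ i then none else some (σ i)

lemma fenc_inj {σ τ : Equiv.Perm (Fin n)}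
    (hfσ : ∀ i, σ i ≠ i) (hfτ : ∀ i, τ i ≠ i)
    (hKσ : ∀ i, σ (σ i) = i ∨ σ (σ (σ i)) = i)
    (hKτ : ∀ i, τ (τ i) = i ∨ τ (τ (τ i)) = i)
    (h : fenc σ = fenc τ) : σ = τ := by
  have hmin : ∀ i, isMin σ i ↔ isMin τ i := by
    intro i
    have hi := congrFun h i
    unfold fenc at hi
    by_cases h1 : isMin σ i <;> by_cases h2 : isMin τ i <;> simp [h1, h2] at hi ⊢
  have hval : ∀ i, ¬ isMin σ i → σ i = τ i := by
    intro i h1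
    have h2 : ¬ isMin τ i := fun h2 => h1 ((hmin i).2 h2)
    have hi := congrFun h i
    unfold fenc at hi
    simpa [h1, h2] using hi
  ext m
  by_cases hm : isMin σ m
  swap
  · simp [hval m hm]
  · -- m is the minimum of its cycle for both σ and τ
    have hmτ : isMin τ m := (hmin m).1 hm
    have hlt : m < σ m := lt_of_le_of_ne hm.1 (Ne.symm (hfσ m))
    have hltτ : m < τ m := lt_of_le_of_ne hmτ.1 (Ne.symm (hfτ m))
    by_cases hc : σ (σ m) = m
    · -- 2-cycle for σ
      set y := σ m with hy
      have hny : ¬ isMin σ y := by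
        intro hmin'
        exact absurd (le_trans hmin'.1 (le_of_eq hc)) (not_le.2 hlt)
      have hτy : τ y = m := (hval y hny) ▸ hc
      rcases hKτ m with hτ2 | hτ3
      · -- τ also a 2-cycle: τ (τ m) = m = τ y → τ m = y
        have : τ (τ m) = τ y := by rw [hτ2, hτy]
        have := τ.injective this
        simpa [this]
      · -- τ a 3-cycle: contradiction
        exfalso
        have h1 : τ (τ (τ m)) = τ y := by rw [hτ3, hτy]
        have h2 : τ (τ m) = y := τ.injective h1
        set x := τ m with hx
        have hnx : ¬ isMin τ x := by
          intro hmin'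
          have : τ (τ x) = m := by
            have : τ (τ (τ m)) = m := hτ3
            simpa [← hx] using this
          exact absurd (le_trans hmin'.2 (le_of_eq this)) (not_le.2 hltτ)
        have hσx : σ x = y := by
          rw [hval x ((hmin x).not.2 (by exact fun hh => hnx hh))]
          · exact (by simpa [← hx] using h2)
        have : x = m := σ.injective (by rw [hσx, ← hy])
        exact absurd this (ne_of_gt hltτ)
    · -- 3-cycle for σ
      have hσ3 : σ (σ (σ m)) = m := (hKσ m).resolve_left hc
      set x := σ m with hx
      set y := σ x with hy
      have hlty : m < y := lt_of_le_of_ne hm.2 (Ne.symm hc)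
      have hny : ¬ isMin σ y := by
        intro hmin'
        exact absurd (le_trans hmin'.1 (le_of_eq hσ3)) (not_le.2 hlty)
      have hnx : ¬ isMin σ x := by
        intro hmin'
        exact absurd (le_trans hmin'.2 (le_of_eq hσ3)) (not_le.2 hlt)
      have hτy : τ y = m := (hval y hny) ▸ hσ3
      have hτx : τ x = y := (hval x hnx) ▸ hy.symm
      rcases hKτ m with hτ2 | hτ3
      · exfalso
        have h1 : τ (τ m) = τ y := by rw [hτ2, hτy]
        have h2 : τ m = y := τ.injective h1
        have : x = m := τ.injective (by rw [hτx, ← h2])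
        exact absurd this (ne_of_gt hlt)
      · have h1 : τ (τ (τ m)) = τ y := by rw [hτ3, hτy]
        have h2 : τ (τ m) = τ x := by rw [τ.injective h1, hτx]
        have h3 : τ m = x := τ.injective h2
        rw [h3]

/-- there are at least `n/3` minima. -/
lemma card_min (σ : Equiv.Perm (Fin n))
    (hK : ∀ i, σ (σ i) = i ∨ σ (σ (σ i)) = i) :
    n ≤ 3 * (Finset.univ.filter (isMin σ)).card := by
  classical
  set g : Fin n → Fin n := fun i => min (min i (σ i)) (σ (σ i)) with hg
  have hgle1 : ∀ i, g i ≤ i := fun i => le_trans (min_le_left _ _) (min_le_left _ _)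
  have hgle2 : ∀ i, g i ≤ σ i := fun i => le_trans (min_le_left _ _) (min_le_right _ _)
  have hgle3 : ∀ i, g i ≤ σ (σ i) := fun i => min_le_right _ _
  have hgmem : ∀ i, g i = i ∨ g i = σ i ∨ g i = σ (σ i) := by
    intro i
    rcases min_cases (min i (σ i)) (σ (σ i)) with ⟨h1, _⟩ | ⟨h1, _⟩
    · rcases min_cases i (σ i) with ⟨h2, _⟩ | ⟨h2, _⟩
      · left; rw [hg]; simp only; rw [h1, h2]
      · right; left; rw [hg]; simp only; rw [h1, h2]
    · right; right; exact h1
  have hgmin : ∀ i, isMin σ (g i) := by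
    intro i
    have h1 := hgle1 i
    have h2 := hgle2 i
    have h3 := hgle3 i
    have hm := hgmem i
    have hk := hK i
    unfold isMin
    revert h1 h2 h3
    rcases hm with h | h | h <;> rw [h] <;> intro h1 h2 h3 <;>
      rcases hk with hk | hk <;> constructor <;> simp_all
  have hfiber : ∀ m ∈ Finset.univ.image g,
      (Finset.univ.filter fun i => g i = m).card ≤ 3 := by
    intro m _
    have hsub : (Finset.univ.filter fun i => g i = m) ⊆ {m, σ m, σ (σ m)} := by
      intro i hi
      rw [Finset.mem_filter] at hi
      have hgi : g i = m := hi.2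
      simp only [Finset.mem_insert, Finset.mem_singleton]
      rcases hgmem i with h | h | h
      · left; rw [← hgi, h]
      · -- m = σ i
        have hm : σ i = m := by rw [← hgi, h]
        rcases hK i with h2 | h3
        · right; left
          rw [← hm, h2]
        · right; right
          rw [← hm, h3]
      · -- m = σ (σ i)
        have hm : σ (σ i) = m := by rw [← hgi, h]
        rcases hK i with h2 | h3
        · left
          rw [← hm, h2]
        · right; left
          rw [← hm, h3]
    calc (Finset.univ.filter fun i => g i = m).card
        ≤ ({m, σ m, σ (σ m)} : Finset (Fin n)).card := Finset.card_le_card hsub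
      _ ≤ 2 + ({σ (σ m)} : Finset (Fin n)).card := by
          refine le_trans (Finset.card_insert_le _ _) ?_
          have := Finset.card_insert_le (σ m) ({σ (σ m)} : Finset (Fin n))
          omega
      _ ≤ 3 := by simp
  have h1 : (Finset.univ : Finset (Fin n)).card ≤ 3 * (Finset.univ.image g).card :=
    Finset.card_le_mul_card_image Finset.univ 3 hfiber
  have h2 : (Finset.univ.image g) ⊆ Finset.univ.filter (isMin σ) := by
    intro m hm
    rw [Finset.mem_image] at hm
    obtain ⟨i, _, rfl⟩ := hm
    exact Finset.mem_filter.2 ⟨Finset.mem_univ _, hgmin i⟩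
  calc n = (Finset.univ : Finset (Fin n)).card := by simp
    _ ≤ 3 * (Finset.univ.image g).card := h1
    _ ≤ 3 * (Finset.univ.filter (isMin σ)).card :=
        Nat.mul_le_mul_left 3 (Finset.card_le_card h2)

/-- The sorted-values encoding. -/
def vals (K : ℕ) (σ : Equiv.Perm (Fin n)) (s : Finset (Fin n)) : Fin K → Option (Fin n) :=
  fun j => ((s.sort (· ≤ ·))[(j : ℕ)]?).map σ

lemma vals_eq {K : ℕ} {σ τ : Equiv.Perm (Fin n)} {s : Finset (Fin n)}
    (hcard : s.card ≤ K) (h : vals K σ s = vals K τ s) :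
    ∀ i ∈ s, σ i = τ i := by
  intro i hi
  set l := s.sort (· ≤ ·) with hl
  have hmem : i ∈ l := (Finset.mem_sort _).2 hi
  obtain ⟨j, hj, hji⟩ := List.mem_iff_getElem.1 hmem
  have hlen : l.length = s.card := Finset.length_sort _
  have hjK : j < K := lt_of_lt_of_le (by rw [← hlen]; exact hj) hcard
  have := congrFun h ⟨j, hjK⟩
  unfold vals at this
  rw [← hl] at this
  rw [List.getElem?_eq_getElem hj] at this
  simp only [Option.map_some] at this
  rw [hji] at this
  exact Option.some_injective _ this

end Stmt13Aux

open Stmt13Aux in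
/-- The number of fixed-point-free permutations of `{1,…,2p}` all of whose cycles have
length 2 or 3 is at most `(Cp)^{4p/3}` for an absolute constant `C > 0`. -/
theorem stmt_13 :
    ∃ C : ℝ, 0 < C ∧ ∀ p : ℕ, 1 ≤ p →
      (Nat.card {σ : Equiv.Perm (Fin (2 * p)) //
          (∀ i, σ i ≠ i) ∧ ∀ k ∈ σ.cycleType, k = 2 ∨ k = 3} : ℝ) ≤
        (C * p) ^ ((4 * (p : ℝ)) / 3) := by
  classical
  refine ⟨12, by norm_num, fun p hp => ?_⟩
  set n : ℕ := 2 * p with hn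
  set K : ℕ := 4 * p / 3 with hK
  set S := {σ : Equiv.Perm (Fin n) //
      (∀ i, σ i ≠ i) ∧ ∀ k ∈ σ.cycleType, k = 2 ∨ k = 3} with hS
  -- Step 1 : cardinality bound via injection
  have hcard : Nat.card S ≤ 2 ^ n * (n + 1) ^ K := by
    have hinj : Function.Injective
        (fun σ : S => ((Bset σ.1, vals K σ.1 (Bset σ.1)) :
          Finset (Fin n) × (Fin K → Option (Fin n)))) := by
      rintro ⟨σ, hfσ, hcσ⟩ ⟨τ, hfτ, hcτ⟩ hst
      have hKσ := key_fact σ hfσ hcσ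
      have hKτ := key_fact τ hfτ hcτ
      simp only [Prod.mk.injEq] at hst
      obtain ⟨hB, hv⟩ := hst
      rw [← hB] at hv
      -- card bound on Bset σ
      have hmin := card_min σ hKσ
      have hsplit : (Finset.univ.filter (isMin σ)).card + (Bset σ).card = n := by
        have := Finset.card_filter_add_card_filter_not
          (s := (Finset.univ : Finset (Fin n))) (p := isMin σ)
        simpa [Bset] using this
      have hBK : (Bset σ).card ≤ K := by
        rw [hK]
        rw [Nat.le_div_iff_mul_le (by norm_num)]
        omega
      have hvals := vals_eq hBK hv
      have hf : fenc σ = fenc τ := by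
        funext i
        by_cases hmi : isMin σ i
        · have hiB : i ∉ Bset σ := by simp [Bset, hmi]
          have hiBτ : i ∉ Bset τ := hB ▸ hiB
          have hmiτ : isMin τ i := by
            by_contra hcon
            exact hiBτ (by simp [Bset, hcon])
          simp [fenc, hmi, hmiτ]
        · have hiB : i ∈ Bset σ := by simp [Bset, hmi]
          have hiBτ : i ∈ Bset τ := hB ▸ hiB
          have hmiτ : ¬ isMin τ i := by
            simp only [Bset, Finset.mem_filter] at hiBτ
            exact hiBτ.2
          simp only [fenc, if_neg hmi, if_neg hmiτ]
          rw [hvals i hiB]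
      exact Subtype.ext (fenc_inj hfσ hfτ hKσ hKτ hf)
    calc Nat.card S ≤ Nat.card (Finset (Fin n) × (Fin K → Option (Fin n))) :=
          Nat.card_le_card_of_injective _ hinj
      _ = 2 ^ n * (n + 1) ^ K := by
          simp [Nat.card_eq_fintype_card, Fintype.card_finset]
  -- Step 2 : real analysis
  have hp1 : (1 : ℝ) ≤ p := by exact_mod_cast hp
  have hppos : (0 : ℝ) < p := lt_of_lt_of_le one_pos hp1
  have hx : (0 : ℝ) ≤ 4 * (p : ℝ) / 3 := by positivity
  have l1 : (4 : ℝ) ^ (p : ℕ) ≤ (4 : ℝ) ^ ((4 * (p : ℝ)) / 3) := by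
    rw [← Real.rpow_natCast (4 : ℝ) p]
    exact Real.rpow_le_rpow_of_exponent_le (by norm_num) (by linarith)
  have l2 : ((2 * (p : ℝ) + 1)) ^ K ≤ ((3 * (p : ℝ))) ^ ((4 * (p : ℝ)) / 3) := by
    have a1 : ((2 * (p : ℝ) + 1)) ^ K ≤ ((3 * (p : ℝ))) ^ K :=
      pow_le_pow_left₀ (by positivity) (by linarith) K
    have a2 : ((3 * (p : ℝ))) ^ K ≤ ((3 * (p : ℝ))) ^ ((4 * (p : ℝ)) / 3) := by
      rw [← Real.rpow_natCast (3 * (p : ℝ)) K]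
      apply Real.rpow_le_rpow_of_exponent_le (by linarith)
      calc ((K : ℕ) : ℝ) ≤ ((4 * p : ℕ) : ℝ) / ((3 : ℕ) : ℝ) := by
            rw [hK]; exact Nat.cast_div_le
        _ = 4 * (p : ℝ) / 3 := by push_cast; ring
    exact a1.trans a2
  calc (Nat.card S : ℝ) ≤ ((2 ^ n * (n + 1) ^ K : ℕ) : ℝ) := by exact_mod_cast hcard
    _ = (4 : ℝ) ^ (p : ℕ) * ((2 * (p : ℝ) + 1)) ^ K := by
        rw [hn]
        push_cast
        rw [pow_mul]
        norm_num
    _ ≤ (4 : ℝ) ^ ((4 * (p : ℝ)) / 3) * ((3 * (p : ℝ))) ^ ((4 * (p : ℝ)) / 3) :=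
        mul_le_mul l1 l2 (by positivity) (by positivity)
    _ = (12 * (p : ℝ)) ^ ((4 * (p : ℝ)) / 3) := by
        rw [← Real.mul_rpow (by norm_num) (by positivity)]
        congr 1
        ring
end

section
/- Let (g_n)_{n ∈ ℕ} be a sequence of independent real-valued random variables on a probability space (Ω, P), each with E[g_n] = 0, each satisfying the tail bound P(|g_n| ≥ ρ) ≤ C₀·exp(−c₀·ρ^γ) for all ρ ≥ 0, with common constants C₀, c₀ > 0 and exponent γ ∈ (0, 1]. Then there exists a constant C > 0 depending only on C₀, c₀ and γ such that for every integer p ≥ 1 and every finitely supported sequence (c_n) of complex numbers: E[ |Σ_n c_n·g_n|^{2p} ] ≤ (C·p)^{2p(2γ+3)/(3γ)} · ( Σ_n |c_n|² )^p. -/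
open Finset
open scoped ENNReal NNReal

namespace Stmt16

lemma rpow_le_rpow_self_mul_exp {t b : ℝ} (ht : 0 < t) (hb : 0 < b) :
    t ^ b ≤ b ^ b * Real.exp t := by
  rw [Real.rpow_def_of_pos ht, Real.rpow_def_of_pos hb, ← Real.exp_add]
  apply Real.exp_le_exp.2
  have h := Real.log_le_sub_one_of_pos (div_pos ht hb)
  have hlog : Real.log (t / b) = Real.log t - Real.log b := Real.log_div ht.ne' hb.ne'
  have hd : t / b * b = t := div_mul_cancel₀ t hb.ne'
  nlinarith [mul_le_mul_of_nonneg_right h hb.le]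

lemma rpow_mul_exp_neg_le {c γ : ℝ} (hc : 0 < c) (hγ0 : 0 < γ)
    {u : ℝ} (hu : 0 ≤ u) {s : ℝ} (hs : 0 < s) :
    u ^ s * Real.exp (-(c * u ^ γ)) ≤ (s / (c * γ)) ^ (s / γ) := by
  rcases eq_or_lt_of_le hu with h0 | hu
  · rw [← h0, Real.zero_rpow hs.ne', zero_mul]
    positivity
  · have hcu : 0 < c * u ^ γ := mul_pos hc (Real.rpow_pos_of_pos hu _)
    have h1 : u ^ s = (c * u ^ γ) ^ (s / γ) / c ^ (s / γ) := by
      rw [Real.mul_rpow hc.le (Real.rpow_pos_of_pos hu _).le, ← Real.rpow_mul hu.le]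
      rw [mul_div_assoc]
      field_simp
    have h2 := rpow_le_rpow_self_mul_exp hcu (div_pos hs hγ0)
    have h3 : 0 < (s / γ) ^ (s / γ) := Real.rpow_pos_of_pos (div_pos hs hγ0) _
    calc u ^ s * Real.exp (-(c * u ^ γ))
        = (c * u ^ γ) ^ (s / γ) / c ^ (s / γ) * Real.exp (-(c * u ^ γ)) := by rw [h1]
      _ ≤ (s / γ) ^ (s / γ) * Real.exp (c * u ^ γ) / c ^ (s / γ) * Real.exp (-(c * u ^ γ)) := by
          have : 0 ≤ c ^ (s/γ) := (Real.rpow_pos_of_pos hc _).le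
          gcongr
      _ = (s / γ) ^ (s / γ) / c ^ (s / γ) := by
          rw [div_mul_eq_mul_div, mul_assoc, ← Real.exp_add, add_neg_cancel, Real.exp_zero,
            mul_one]
      _ = (s / (c * γ)) ^ (s / γ) := by
          rw [← Real.div_rpow (div_pos hs hγ0).le hc.le]
          congr 1
          rw [div_div, mul_comm γ c]


noncomputable def w (A γ : ℝ) (j : ℕ) : ℝ :=
  if j = 0 then 1 else (A * ((j : ℝ) + 2)) ^ (((j : ℝ) + 2) / γ)

lemma w_nonneg {A γ : ℝ} (hA : 0 ≤ A) (j : ℕ) : 0 ≤ w A γ j := by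
  unfold w; split
  · norm_num
  · positivity

noncomputable def al (γ : ℝ) : ℝ := 1 / γ + 2 / 3

noncomputable def RR (B γ : ℝ) (m : ℕ) : ℝ := (B * (m : ℝ)) ^ (al γ * (m : ℝ))

lemma RR_nonneg {B γ : ℝ} (hB : 0 ≤ B) (m : ℕ) : 0 ≤ RR B γ m :=
  Real.rpow_nonneg (by positivity) _

lemma pow_self_le_exp_mul_factorial : ∀ j : ℕ, (j : ℝ) ^ j ≤ (Real.exp 1) ^ j * (j.factorial : ℝ)
  | 0 => by norm_num
  | 1 => by simpa using Real.one_le_exp (by norm_num : (0:ℝ) ≤ 1)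
  | (j + 2) => by
    have hj : (0:ℝ) < (j:ℝ) + 1 := by positivity
    have ih := pow_self_le_exp_mul_factorial (j + 1)
    have key : ((j:ℝ) + 2) ^ (j + 1) ≤ Real.exp 1 * ((j:ℝ) + 1) ^ (j + 1) := by
      have h1 : (j:ℝ) + 2 = ((j:ℝ) + 1) * (1 + 1 / ((j:ℝ) + 1)) := by field_simp; ring
      have h2 : (1 + 1 / ((j:ℝ) + 1)) ^ (j + 1) ≤ Real.exp 1 := by
        have h3 : 1 + 1 / ((j:ℝ) + 1) ≤ Real.exp (1 / ((j:ℝ) + 1)) := by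
          have := Real.add_one_le_exp (1 / ((j:ℝ) + 1)); linarith
        calc (1 + 1 / ((j:ℝ) + 1)) ^ (j + 1) ≤ (Real.exp (1 / ((j:ℝ) + 1))) ^ (j + 1) :=
              pow_le_pow_left₀ (by positivity) h3 _
          _ = Real.exp ((1 / ((j:ℝ) + 1)) * (j + 1)) := by
              rw [← Real.exp_nat_mul]
              congr 1
              push_cast
              ring
          _ = Real.exp 1 := by
              congr 1; field_simp
      calc ((j:ℝ) + 2) ^ (j + 1) = ((j:ℝ) + 1) ^ (j + 1) * (1 + 1 / ((j:ℝ) + 1)) ^ (j + 1) := by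
            rw [h1, mul_pow]
        _ ≤ ((j:ℝ) + 1) ^ (j + 1) * Real.exp 1 :=
            mul_le_mul_of_nonneg_left h2 (by positivity)
        _ = Real.exp 1 * ((j:ℝ) + 1) ^ (j + 1) := by ring
    have e1 : (0:ℝ) < Real.exp 1 := Real.exp_pos 1
    calc ((j + 2 : ℕ) : ℝ) ^ (j + 2) = ((j:ℝ) + 2) * ((j:ℝ) + 2) ^ (j + 1) := by
          push_cast; ring
      _ ≤ ((j:ℝ) + 2) * (Real.exp 1 * ((j:ℝ) + 1) ^ (j + 1)) :=
          mul_le_mul_of_nonneg_left key (by positivity)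
      _ ≤ ((j:ℝ) + 2) * (Real.exp 1 * ((Real.exp 1) ^ (j+1) * ((j+1).factorial : ℝ))) := by
          have : ((j+1:ℕ):ℝ) ^ (j+1) = ((j:ℝ)+1) ^ (j+1) := by push_cast; ring
          rw [← this]
          exact mul_le_mul_of_nonneg_left (mul_le_mul_of_nonneg_left ih e1.le) (by positivity)
      _ = (Real.exp 1) ^ (j + 2) * (((j:ℝ) + 2) * ((j+1).factorial : ℝ)) := by ring
      _ = (Real.exp 1) ^ (j + 2) * ((j+2).factorial : ℝ) := by
          congr 1
          rw [Nat.factorial_succ (j+1)]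
          push_cast; ring

lemma choose_le_emj {m j : ℕ} (hj : 1 ≤ j) (hjm : j ≤ m) :
    ((m.choose j : ℕ) : ℝ) ≤ (Real.exp 1 * (m : ℝ) / (j : ℝ)) ^ j := by
  have hj0 : (0:ℝ) < (j:ℝ) := by exact_mod_cast hj
  have hfac : (0:ℝ) < (j.factorial : ℝ) := by exact_mod_cast j.factorial_pos
  have h1 : ((m.choose j : ℕ) : ℝ) ≤ (m : ℝ) ^ j / (j.factorial : ℝ) :=
    Nat.choose_le_pow_div j m
  refine h1.trans ?_
  rw [div_pow, div_le_div_iff₀ hfac (by positivity)]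
  have h2 : (j:ℝ) ^ j ≤ (Real.exp 1) ^ j * (j.factorial : ℝ) := pow_self_le_exp_mul_factorial j
  calc (m:ℝ) ^ j * (j:ℝ) ^ j ≤ (m:ℝ) ^ j * ((Real.exp 1) ^ j * (j.factorial : ℝ)) :=
        mul_le_mul_of_nonneg_left h2 (by positivity)
    _ = (Real.exp 1 * (m:ℝ)) ^ j * (j.factorial : ℝ) := by rw [mul_pow]; ring

lemma sum_halves (m : ℕ) : ∑ j ∈ Icc 2 m, ((1:ℝ)/2) ^ j ≤ 1 - 2 * ((1:ℝ)/2) ^ (m + 1) := by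
  induction m with
  | zero => simp
  | succ n ih =>
    rcases Nat.lt_or_ge n 1 with hn | hn
    · interval_cases n <;> simp [Finset.Icc_self] <;> norm_num
    · rw [Finset.sum_Icc_succ_top (by omega : 2 ≤ n + 1)]
      have : ((1:ℝ)/2) ^ (n + 1) = 2 * ((1:ℝ)/2) ^ (n + 2) := by ring
      nlinarith [ih]


section Arith

variable {γ A B : ℝ}
variable (hγ0 : 0 < γ) (hγ1 : γ ≤ 1) (hA : 1 ≤ A)
  (hB : B = (16 * Real.exp 1 * A) ^ ((3:ℝ) / γ))

include hγ0 hγ1 hA hB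

lemma base_le_B : 16 * Real.exp 1 * A ≤ B := by
  have he : (1:ℝ) ≤ Real.exp 1 := Real.one_le_exp (by norm_num)
  have hbase : (1:ℝ) ≤ 16 * Real.exp 1 * A := by nlinarith
  have h3γ : (1:ℝ) ≤ 3 / γ := by
    rw [le_div_iff₀ hγ0]; linarith
  calc 16 * Real.exp 1 * A = (16 * Real.exp 1 * A) ^ (1:ℝ) := (Real.rpow_one _).symm
    _ ≤ (16 * Real.exp 1 * A) ^ ((3:ℝ)/γ) := Real.rpow_le_rpow_of_exponent_le hbase h3γ
    _ = B := hB.symm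

lemma B_pos : (0:ℝ) < B := by
  have he : (1:ℝ) ≤ Real.exp 1 := Real.one_le_exp (by norm_num)
  have := base_le_B hγ0 hγ1 hA hB
  nlinarith

lemma claimA {m j : ℕ} (hj : 2 ≤ j) (hjm : j ≤ m) :
    (Real.exp 1 * (m:ℝ) / (j:ℝ)) * (2 * A * (j:ℝ)) ^ ((1:ℝ)/γ) ≤
      (1/4) * (B * (m:ℝ)) ^ ((1:ℝ)/γ) := by
  have he : (1:ℝ) ≤ Real.exp 1 := Real.one_le_exp (by norm_num)
  have hBb := base_le_B hγ0 hγ1 hA hB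
  have hBpos := B_pos hγ0 hγ1 hA hB
  have hj0 : (0:ℝ) < (j:ℝ) := by
    have : (0:ℕ) < j := by omega
    exact_mod_cast this
  have hm0 : (0:ℝ) < (m:ℝ) := by
    have : (0:ℕ) < m := by omega
    exact_mod_cast this
  have hx0 : (0:ℝ) < 2 * A * (j:ℝ) / (B * (m:ℝ)) := by positivity
  have hx1 : 2 * A * (j:ℝ) / (B * (m:ℝ)) ≤ 1 := by
    rw [div_le_one (by positivity)]
    have hjm' : (j:ℝ) ≤ (m:ℝ) := by exact_mod_cast hjm
    have h2A : 2 * A ≤ B := by nlinarith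
    exact mul_le_mul h2A hjm' hj0.le hBpos.le
  have h1γ : (1:ℝ) ≤ 1/γ := by
    rw [le_div_iff₀ hγ0]; linarith
  have hsplit : (2 * A * (j:ℝ)) ^ ((1:ℝ)/γ)
      = (2 * A * (j:ℝ) / (B * (m:ℝ))) ^ ((1:ℝ)/γ) * (B * (m:ℝ)) ^ ((1:ℝ)/γ) := by
    rw [← Real.mul_rpow hx0.le (by positivity)]
    congr 1
    field_simp
  have hxle : (2 * A * (j:ℝ) / (B * (m:ℝ))) ^ ((1:ℝ)/γ) ≤ 2 * A * (j:ℝ) / (B * (m:ℝ)) := by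
    calc (2 * A * (j:ℝ) / (B * (m:ℝ))) ^ ((1:ℝ)/γ)
        ≤ (2 * A * (j:ℝ) / (B * (m:ℝ))) ^ (1:ℝ) :=
          Real.rpow_le_rpow_of_exponent_ge hx0 hx1 h1γ
      _ = 2 * A * (j:ℝ) / (B * (m:ℝ)) := Real.rpow_one _
  have hkey : (Real.exp 1 * (m:ℝ) / (j:ℝ)) * (2 * A * (j:ℝ) / (B * (m:ℝ))) ≤ 1/4 := by
    have : (Real.exp 1 * (m:ℝ) / (j:ℝ)) * (2 * A * (j:ℝ) / (B * (m:ℝ)))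
        = 2 * Real.exp 1 * A / B := by
      field_simp
    rw [this, div_le_iff₀ hBpos]
    nlinarith
  calc (Real.exp 1 * (m:ℝ) / (j:ℝ)) * (2 * A * (j:ℝ)) ^ ((1:ℝ)/γ)
      = (Real.exp 1 * (m:ℝ) / (j:ℝ)) * ((2 * A * (j:ℝ) / (B * (m:ℝ))) ^ ((1:ℝ)/γ)
          * (B * (m:ℝ)) ^ ((1:ℝ)/γ)) := by rw [hsplit]
    _ ≤ (Real.exp 1 * (m:ℝ) / (j:ℝ)) * ((2 * A * (j:ℝ) / (B * (m:ℝ)))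
          * (B * (m:ℝ)) ^ ((1:ℝ)/γ)) := by
        apply mul_le_mul_of_nonneg_left _ (by positivity)
        exact mul_le_mul_of_nonneg_right hxle (by positivity)
    _ = ((Real.exp 1 * (m:ℝ) / (j:ℝ)) * (2 * A * (j:ℝ) / (B * (m:ℝ))))
          * (B * (m:ℝ)) ^ ((1:ℝ)/γ) := by ring
    _ ≤ (1/4) * (B * (m:ℝ)) ^ ((1:ℝ)/γ) :=
        mul_le_mul_of_nonneg_right hkey (by positivity)

lemma claimB {m j : ℕ} (hj : 2 ≤ j) (hjm : j ≤ m) :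
    (2 * A * (j:ℝ)) ^ ((2:ℝ)/γ) ≤ (B * (m:ℝ)) ^ (2 * (j:ℝ) / 3) := by
  have he : (1:ℝ) ≤ Real.exp 1 := Real.one_le_exp (by norm_num)
  have hBb := base_le_B hγ0 hγ1 hA hB
  have hBpos := B_pos hγ0 hγ1 hA hB
  have hj0 : (0:ℝ) < (j:ℝ) := by
    have : (0:ℕ) < j := by omega
    exact_mod_cast this
  have hm1 : (1:ℝ) ≤ (m:ℝ) := by
    have : (1:ℕ) ≤ m := by omega
    exact_mod_cast this
  have h4A : (1:ℝ) ≤ 4 * A := by linarith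
  -- 2 * A * j ≤ (4*A)^j
  have hstep : 2 * A * (j:ℝ) ≤ (4 * A) ^ j := by
    have hj2 : (j:ℝ) ≤ 2 ^ j := by
      exact_mod_cast (Nat.lt_two_pow_self (n := j)).le
    have h2A : (2 * A) ≤ (2 * A) ^ j := by
      apply le_self_pow₀ (by linarith) (by omega)
    calc 2 * A * (j:ℝ) ≤ (2 * A) ^ j * 2 ^ j := by
          apply mul_le_mul h2A hj2 hj0.le (by positivity)
      _ = (4 * A) ^ j := by rw [← mul_pow]; ring_nf
  have h1 : (2 * A * (j:ℝ)) ^ ((2:ℝ)/γ) ≤ ((4 * A) ^ j) ^ ((2:ℝ)/γ) :=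
    Real.rpow_le_rpow (by positivity) hstep (by positivity)
  have h2 : ((4 * A) ^ j : ℝ) ^ ((2:ℝ)/γ) = ((4 * A) ^ ((3:ℝ)/γ)) ^ (2 * (j:ℝ) / 3) := by
    rw [← Real.rpow_natCast (4 * A) j, ← Real.rpow_mul (by positivity),
      ← Real.rpow_mul (by positivity)]
    congr 1
    field_simp
  have h3 : ((4 * A) ^ ((3:ℝ)/γ)) ^ (2 * (j:ℝ) / 3) ≤ (B * (m:ℝ)) ^ (2 * (j:ℝ) / 3) := by
    apply Real.rpow_le_rpow (by positivity) _ (by positivity)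
    calc (4 * A) ^ ((3:ℝ)/γ) ≤ (16 * Real.exp 1 * A) ^ ((3:ℝ)/γ) := by
          apply Real.rpow_le_rpow (by positivity) (by nlinarith) (by positivity)
      _ = B := hB.symm
      _ = B * 1 := (mul_one B).symm
      _ ≤ B * (m:ℝ) := by
          apply mul_le_mul_of_nonneg_left hm1 hBpos.le
  calc (2 * A * (j:ℝ)) ^ ((2:ℝ)/γ) ≤ ((4 * A) ^ j : ℝ) ^ ((2:ℝ)/γ) := h1
    _ = ((4 * A) ^ ((3:ℝ)/γ)) ^ (2 * (j:ℝ) / 3) := h2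
    _ ≤ (B * (m:ℝ)) ^ (2 * (j:ℝ) / 3) := h3

lemma lemG {m j : ℕ} (hj : 2 ≤ j) (hjm : j ≤ m) :
    ((m.choose j : ℕ) : ℝ) * w A γ j * RR B γ (m - j) ≤ ((1:ℝ)/2) ^ j * RR B γ m := by
  have he : (1:ℝ) ≤ Real.exp 1 := Real.one_le_exp (by norm_num)
  have hBpos := B_pos hγ0 hγ1 hA hB
  have hj0 : (0:ℝ) < (j:ℝ) := by
    have : (0:ℕ) < j := by omega
    exact_mod_cast this
  have hm0 : (0:ℝ) < (m:ℝ) := by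
    have : (0:ℕ) < m := by omega
    exact_mod_cast this
  have hal : 0 < al γ := by
    unfold al
    positivity
  have hBm1 : (0:ℝ) < B * (m:ℝ) := by positivity
  -- step 1 : w ≤ (2Aj)^((j+2)/γ)
  have hw : w A γ j ≤ (2 * A * (j:ℝ)) ^ (((j:ℝ) + 2)/γ) := by
    unfold w
    rw [if_neg (by omega : ¬ j = 0)]
    apply Real.rpow_le_rpow (by positivity) _ (by positivity)
    have : (j:ℝ) + 2 ≤ 2 * (j:ℝ) := by
      have : (2:ℝ) ≤ (j:ℝ) := by exact_mod_cast hj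
      linarith
    nlinarith
  -- split exponent
  have hsplit : (2 * A * (j:ℝ)) ^ (((j:ℝ) + 2)/γ)
      = ((2 * A * (j:ℝ)) ^ ((1:ℝ)/γ)) ^ j * (2 * A * (j:ℝ)) ^ ((2:ℝ)/γ) := by
    have hpos : (0:ℝ) < 2 * A * (j:ℝ) := by positivity
    rw [← Real.rpow_natCast ((2 * A * (j:ℝ)) ^ ((1:ℝ)/γ)) j,
      ← Real.rpow_mul hpos.le, ← Real.rpow_add hpos]
    congr 1
    field_simp
  have hchoose := choose_le_emj (by omega : 1 ≤ j) hjm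
  have hwn := w_nonneg (by linarith : (0:ℝ) ≤ A) (γ := γ) j
  -- main chain for choose * w
  have hcw : ((m.choose j : ℕ) : ℝ) * w A γ j
      ≤ ((1:ℝ)/4) ^ j * (B * (m:ℝ)) ^ (al γ * (j:ℝ)) := by
    have hA1 := claimA hγ0 hγ1 hA hB hj hjm
    have hB1 := claimB hγ0 hγ1 hA hB hj hjm
    calc ((m.choose j : ℕ) : ℝ) * w A γ j
        ≤ (Real.exp 1 * (m:ℝ) / (j:ℝ)) ^ j * ((2 * A * (j:ℝ)) ^ (((j:ℝ) + 2)/γ)) := by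
          apply mul_le_mul hchoose hw hwn (by positivity)
      _ = ((Real.exp 1 * (m:ℝ) / (j:ℝ)) * (2 * A * (j:ℝ)) ^ ((1:ℝ)/γ)) ^ j
            * (2 * A * (j:ℝ)) ^ ((2:ℝ)/γ) := by
          rw [hsplit, mul_pow]
          ring
      _ ≤ ((1/4) * (B * (m:ℝ)) ^ ((1:ℝ)/γ)) ^ j * (B * (m:ℝ)) ^ (2 * (j:ℝ) / 3) := by
          apply mul_le_mul _ hB1 (by positivity) (by positivity)
          apply pow_le_pow_left₀ (by positivity) hA1
      _ = ((1:ℝ)/4) ^ j * ((B * (m:ℝ)) ^ ((1:ℝ)/γ * (j:ℝ)) * (B * (m:ℝ)) ^ (2 * (j:ℝ) / 3)) := by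
          rw [mul_pow, ← Real.rpow_natCast ((B * (m:ℝ)) ^ ((1:ℝ)/γ)) j,
            ← Real.rpow_mul hBm1.le]
          ring_nf
      _ = ((1:ℝ)/4) ^ j * (B * (m:ℝ)) ^ (al γ * (j:ℝ)) := by
          rw [← Real.rpow_add hBm1]
          congr 2
          unfold al
          field_simp
  -- RR (m-j) ≤ (B*m) ^ (al γ * (m - j))
  have hRmj : RR B γ (m - j) ≤ (B * (m:ℝ)) ^ (al γ * ((m:ℝ) - (j:ℝ))) := by
    unfold RR
    have hcast : ((m - j : ℕ) : ℝ) = (m:ℝ) - (j:ℝ) := by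
      push_cast [Nat.cast_sub hjm]
      ring
    rw [hcast]
    have hjm' : (j:ℝ) ≤ (m:ℝ) := by exact_mod_cast hjm
    have hmj : (0:ℝ) ≤ (m:ℝ) - (j:ℝ) := by linarith
    refine Real.rpow_le_rpow (mul_nonneg hBpos.le hmj) ?_ (mul_nonneg hal.le hmj)
    apply mul_le_mul_of_nonneg_left _ hBpos.le
    linarith [hj0.le]
  calc ((m.choose j : ℕ) : ℝ) * w A γ j * RR B γ (m - j)
      ≤ (((1:ℝ)/4) ^ j * (B * (m:ℝ)) ^ (al γ * (j:ℝ))) * ((B * (m:ℝ)) ^ (al γ * ((m:ℝ) - (j:ℝ)))) := by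
        apply mul_le_mul hcw hRmj (RR_nonneg hBpos.le _) (by positivity)
    _ = ((1:ℝ)/4) ^ j * (B * (m:ℝ)) ^ (al γ * (m:ℝ)) := by
        rw [mul_assoc, ← Real.rpow_add hBm1]
        congr 2
        ring
    _ ≤ ((1:ℝ)/2) ^ j * RR B γ m := by
        unfold RR
        apply mul_le_mul_of_nonneg_right _ (by positivity)
        apply pow_le_pow_left₀ (by norm_num) (by norm_num)


end Arith

section Comb

variable (A γ : ℝ) (F : Finset ℕ) (a : ℕ → ℝ)

noncomputable def T (k : ℕ → ℕ) : ℝ :=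
  (Nat.multinomial F k : ℝ) * ∏ n ∈ F, (|a n| ^ k n * w A γ (k n))

noncomputable def V (m : ℕ) : ℝ :=
  ∑ k ∈ (F.piAntidiag m).filter (fun k => ∀ n ∈ F, k n ≠ 1), T A γ F a k

lemma T_nonneg (hA : 0 ≤ A) (k : ℕ → ℕ) : 0 ≤ T A γ F a k := by
  unfold T
  apply mul_nonneg (by positivity)
  apply Finset.prod_nonneg
  intro n _
  exact mul_nonneg (by positivity) (w_nonneg hA _)

lemma V_nonneg (hA : 0 ≤ A) (m : ℕ) : 0 ≤ V A γ F a m :=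
  Finset.sum_nonneg fun k _ => T_nonneg A γ F a hA k

lemma V_zero : V A γ F a 0 = 1 := by
  unfold V
  rw [Finset.piAntidiag_zero]
  rw [Finset.filter_singleton]
  rw [if_pos (by intro n _; simp)]
  rw [Finset.sum_singleton]
  unfold T w
  simp [Nat.multinomial]

lemma V_one : V A γ F a 1 = 0 := by
  unfold V
  apply Finset.sum_eq_zero
  intro k hk
  exfalso
  rw [Finset.mem_filter, Finset.mem_piAntidiag] at hk
  obtain ⟨⟨hsum, hsupp⟩, hne1⟩ := hk
  obtain ⟨n, hnF, hn0⟩ := Finset.exists_ne_zero_of_sum_ne_zero (by omega : F.sum k ≠ 0) 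
  have hle : k n ≤ 1 := by
    rw [← hsum]
    exact Finset.single_le_sum (fun i _ => Nat.zero_le _) hnF
  exact hne1 n hnF (by omega)

/-- least element of the support of `k` -/
noncomputable def nmin (k : ℕ → ℕ) : ℕ := sInf {i | k i ≠ 0}

lemma sum_abs_pow_le {j : ℕ} (hj : 2 ≤ j) :
    ∑ n ∈ F, |a n| ^ j ≤ Real.sqrt (∑ n ∈ F, a n ^ 2) ^ j := by
  set t := Real.sqrt (∑ n ∈ F, a n ^ 2) with hts
  have htn : 0 ≤ t := Real.sqrt_nonneg _
  have ht2 : t ^ 2 = ∑ n ∈ F, a n ^ 2 := Real.sq_sqrt (by positivity)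
  have habs : ∀ n ∈ F, |a n| ≤ t := by
    intro n hn
    rw [← Real.sqrt_sq_eq_abs, hts]
    apply Real.sqrt_le_sqrt
    exact Finset.single_le_sum (fun i _ => sq_nonneg (a i)) hn
  have hsplit : j = 2 + (j - 2) := by omega
  calc ∑ n ∈ F, |a n| ^ j ≤ ∑ n ∈ F, a n ^ 2 * t ^ (j - 2) := by
        apply Finset.sum_le_sum
        intro n hn
        have h1 : |a n| ^ j = a n ^ 2 * |a n| ^ (j - 2) := by
          rw [← sq_abs (a n), ← pow_add]
          have h2 : 2 + (j - 2) = j := by omega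
          rw [h2]
        rw [h1]
        exact mul_le_mul_of_nonneg_left (pow_le_pow_left₀ (abs_nonneg _) (habs n hn) _)
          (by positivity)
    _ = t ^ 2 * t ^ (j - 2) := by rw [← Finset.sum_mul, ht2]
    _ = t ^ j := by
        rw [← pow_add]
        have h2 : 2 + (j - 2) = j := by omega
        rw [h2]

lemma V_rec (hA : 0 ≤ A) {m : ℕ} (hm : 2 ≤ m) :
    V A γ F a m ≤ ∑ j ∈ Finset.Icc 2 m,
      ((m.choose j : ℕ) : ℝ) * w A γ j * Real.sqrt (∑ n ∈ F, a n ^ 2) ^ j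
        * V A γ F a (m - j) := by
  classical
  set t := Real.sqrt (∑ n ∈ F, a n ^ 2) with hts
  have htn : 0 ≤ t := Real.sqrt_nonneg _
  set S := (F.piAntidiag m).filter (fun k => ∀ n ∈ F, k n ≠ 1) with hS
  -- basic facts about members of S
  have hmem : ∀ k ∈ S, F.sum k = m ∧ (∀ i, k i ≠ 0 → i ∈ F) ∧ (∀ n ∈ F, k n ≠ 1) := by
    intro k hk
    rw [hS, Finset.mem_filter, Finset.mem_piAntidiag] at hk
    exact ⟨hk.1.1, hk.1.2, hk.2⟩
  have hnmin : ∀ k ∈ S, nmin k ∈ F ∧ k (nmin k) ≠ 0 := by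
    intro k hk
    obtain ⟨hsum, hsupp, _⟩ := hmem k hk
    have hne : {i | k i ≠ 0}.Nonempty := by
      obtain ⟨n, _, hn0⟩ := Finset.exists_ne_zero_of_sum_ne_zero
        (by omega : F.sum k ≠ 0)
      exact ⟨n, hn0⟩
    have h0 : k (nmin k) ≠ 0 := Nat.sInf_mem hne
    exact ⟨hsupp _ h0, h0⟩
  -- fiber decomposition over the minimal support element
  have hdec1 : V A γ F a m
      = ∑ n ∈ F, ∑ k ∈ S.filter (fun k => nmin k = n), T A γ F a k := by
    rw [Finset.sum_fiberwise_of_maps_to (fun k hk => (hnmin k hk).1)]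
    rfl
  rw [hdec1]
  -- inner bound for each n
  have hinner : ∀ n ∈ F, ∑ k ∈ S.filter (fun k => nmin k = n), T A γ F a k
      ≤ ∑ j ∈ Finset.Icc 2 m,
          ((m.choose j : ℕ) : ℝ) * w A γ j * |a n| ^ j * V A γ F a (m - j) := by
    intro n hnF
    have hdec2 : ∑ k ∈ S.filter (fun k => nmin k = n), T A γ F a k
        = ∑ j ∈ Finset.Icc 2 m,
            ∑ k ∈ (S.filter (fun k => nmin k = n)).filter (fun k => k n = j), T A γ F a k := by
      rw [Finset.sum_fiberwise_of_maps_to]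
      intro k hk
      rw [Finset.mem_filter] at hk
      obtain ⟨hsum, hsupp, hne1⟩ := hmem k hk.1
      have h0 : k n ≠ 0 := by rw [← hk.2]; exact (hnmin k hk.1).2
      have h1 : k n ≠ 1 := hne1 n hnF
      have hle : k n ≤ m := by
        rw [← hsum]
        exact Finset.single_le_sum (fun i _ => Nat.zero_le _) hnF
      rw [Finset.mem_Icc]
      omega
    rw [hdec2]
    apply Finset.sum_le_sum
    intro j hj
    rw [Finset.mem_Icc] at hj
    set s := (S.filter (fun k => nmin k = n)).filter (fun k => k n = j) with hs
    -- key identity for T on members of s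
    have hTk : ∀ k ∈ s, T A γ F a k
        = ((m.choose j : ℕ) : ℝ) * (|a n| ^ j * w A γ j) * T A γ F a (Function.update k n 0) := by
      intro k hks
      rw [hs, Finset.mem_filter, Finset.mem_filter] at hks
      obtain ⟨⟨hkS, _⟩, hknj⟩ := hks
      obtain ⟨hsum, hsupp, hne1⟩ := hmem k hkS
      have hF : insert n (F.erase n) = F := Finset.insert_erase hnF
      have herase_sum : k n + ∑ i ∈ F.erase n, k i = m := by
        rw [Finset.add_sum_erase F k hnF, hsum]
      -- multinomial of k
      have hmult1 : Nat.multinomial F k = (m.choose j) * Nat.multinomial (F.erase n) k := by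
        conv_lhs => rw [← hF]
        rw [Nat.multinomial_insert (Finset.notMem_erase n F)]
        congr 1
        rw [herase_sum, hknj]
      -- multinomial of update
      have hmult2 : Nat.multinomial F (Function.update k n 0)
          = Nat.multinomial (F.erase n) k := by
        conv_lhs => rw [← hF]
        rw [Nat.multinomial_insert (Finset.notMem_erase n F)]
        rw [Function.update_self, Nat.choose_zero_right, one_mul]
        have hseq : ∀ i ∈ F.erase n, Function.update k n 0 i = k i := by
          intro i hi
          rw [Function.update_of_ne (Finset.ne_of_mem_erase hi)]
        unfold Nat.multinomial
        rw [Finset.sum_congr rfl hseq, Finset.prod_congr rfl (fun i hi => by rw [hseq i hi])]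
      -- the product
      have hprod1 : ∏ i ∈ F, (|a i| ^ k i * w A γ (k i))
          = (|a n| ^ j * w A γ j) * ∏ i ∈ F.erase n, (|a i| ^ k i * w A γ (k i)) := by
        rw [← Finset.mul_prod_erase F _ hnF, hknj]
      have hprod2 : ∏ i ∈ F, (|a i| ^ (Function.update k n 0 i) * w A γ (Function.update k n 0 i))
          = ∏ i ∈ F.erase n, (|a i| ^ k i * w A γ (k i)) := by
        rw [← Finset.mul_prod_erase F _ hnF, Function.update_self]
        rw [pow_zero, one_mul]
        unfold w
        rw [if_pos rfl, one_mul]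
        apply Finset.prod_congr rfl
        intro i hi
        rw [Function.update_of_ne (Finset.ne_of_mem_erase hi)]
      unfold T
      rw [hmult1, hmult2, hprod1, hprod2]
      push_cast
      ring
    -- sum over s
    have hsum_s : ∑ k ∈ s, T A γ F a k
        = ((m.choose j : ℕ) : ℝ) * (|a n| ^ j * w A γ j)
            * ∑ k ∈ s, T A γ F a (Function.update k n 0) := by
      rw [Finset.mul_sum]
      exact Finset.sum_congr rfl hTk
    -- injectivity of update on s
    have hinj : Set.InjOn (fun k : ℕ → ℕ => Function.update k n 0) ↑s := by
      intro k1 hk1 k2 hk2 heq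
      rw [hs, Finset.mem_coe, Finset.mem_filter, Finset.mem_filter] at hk1 hk2
      funext i
      rcases eq_or_ne i n with rfl | hin
      · rw [hk1.2, hk2.2]
      · have := congr_fun heq i
        simp only [Function.update_apply, if_neg hin] at this
        exact this
    have himage : s.image (fun k => Function.update k n 0)
        ⊆ (F.piAntidiag (m - j)).filter (fun k => ∀ i ∈ F, k i ≠ 1) := by
      intro k' hk'
      rw [Finset.mem_image] at hk'
      obtain ⟨k, hks, rfl⟩ := hk'
      rw [hs, Finset.mem_filter, Finset.mem_filter] at hks
      obtain ⟨⟨hkS, _⟩, hknj⟩ := hks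
      obtain ⟨hsum, hsupp, hne1⟩ := hmem k hkS
      rw [Finset.mem_filter, Finset.mem_piAntidiag]
      refine ⟨⟨?_, ?_⟩, ?_⟩
      · rw [Finset.sum_update_of_mem hnF, zero_add, Finset.sdiff_singleton_eq_erase]
        have h4 : k n + ∑ x ∈ F.erase n, k x = m := by
          rw [Finset.add_sum_erase F k hnF]
          exact hsum
        omega
      · intro i hi
        rcases eq_or_ne i n with rfl | hin
        · rw [Function.update_self] at hi; omega
        · rw [Function.update_of_ne hin] at hi
          exact hsupp i hi
      · intro i hiF
        rcases eq_or_ne i n with rfl | hin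
        · rw [Function.update_self]; omega
        · rw [Function.update_of_ne hin]
          exact hne1 i hiF
    have himg_sum : ∑ k ∈ s, T A γ F a (Function.update k n 0) ≤ V A γ F a (m - j) := by
      rw [← Finset.sum_image hinj]
      apply Finset.sum_le_sum_of_subset_of_nonneg himage
      intro i _ _
      exact T_nonneg A γ F a hA i
    calc ∑ k ∈ s, T A γ F a k
        = ((m.choose j : ℕ) : ℝ) * (|a n| ^ j * w A γ j)
            * ∑ k ∈ s, T A γ F a (Function.update k n 0) := hsum_s
      _ ≤ ((m.choose j : ℕ) : ℝ) * (|a n| ^ j * w A γ j) * V A γ F a (m - j) := by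
          apply mul_le_mul_of_nonneg_left himg_sum
          apply mul_nonneg (by positivity)
          exact mul_nonneg (by positivity) (w_nonneg hA _)
      _ = ((m.choose j : ℕ) : ℝ) * w A γ j * |a n| ^ j * V A γ F a (m - j) := by ring
  -- combine
  calc ∑ n ∈ F, ∑ k ∈ S.filter (fun k => nmin k = n), T A γ F a k
      ≤ ∑ n ∈ F, ∑ j ∈ Finset.Icc 2 m,
          ((m.choose j : ℕ) : ℝ) * w A γ j * |a n| ^ j * V A γ F a (m - j) :=
        Finset.sum_le_sum hinner
    _ = ∑ j ∈ Finset.Icc 2 m, ((m.choose j : ℕ) : ℝ) * w A γ j * V A γ F a (m - j)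
          * ∑ n ∈ F, |a n| ^ j := by
        rw [Finset.sum_comm]
        apply Finset.sum_congr rfl
        intro j _
        rw [Finset.mul_sum]
        apply Finset.sum_congr rfl
        intro n _
        ring
    _ ≤ ∑ j ∈ Finset.Icc 2 m, ((m.choose j : ℕ) : ℝ) * w A γ j * V A γ F a (m - j) * t ^ j := by
        apply Finset.sum_le_sum
        intro j hj
        rw [Finset.mem_Icc] at hj
        apply mul_le_mul_of_nonneg_left (sum_abs_pow_le F a hj.1)
        apply mul_nonneg (mul_nonneg (by positivity) (w_nonneg hA _))
        exact V_nonneg A γ F a hA _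
    _ = ∑ j ∈ Finset.Icc 2 m,
          ((m.choose j : ℕ) : ℝ) * w A γ j * t ^ j * V A γ F a (m - j) := by
        apply Finset.sum_congr rfl
        intro j _
        ring

end Comb

lemma V_le {γ A B : ℝ} (hγ0 : 0 < γ) (hγ1 : γ ≤ 1) (hA : 1 ≤ A)
    (hB : B = (16 * Real.exp 1 * A) ^ ((3:ℝ) / γ)) (F : Finset ℕ) (a : ℕ → ℝ) :
    ∀ m : ℕ, V A γ F a m ≤ Real.sqrt (∑ n ∈ F, a n ^ 2) ^ m * RR B γ m := by
  have hA0 : (0:ℝ) ≤ A := by linarith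
  have hBpos := B_pos hγ0 hγ1 hA hB
  set t := Real.sqrt (∑ n ∈ F, a n ^ 2) with hts
  have htn : 0 ≤ t := Real.sqrt_nonneg _
  intro m
  induction m using Nat.strong_induction_on with
  | _ m ih =>
    match m, ih with
    | 0, _ => 
      rw [V_zero]
      unfold RR
      norm_num
    | 1, _ =>
      rw [V_one]
      exact mul_nonneg (by positivity) (RR_nonneg hBpos.le _)
    | (m + 2), ih =>
      have hm2 : 2 ≤ m + 2 := by omega
      calc V A γ F a (m + 2)
          ≤ ∑ j ∈ Finset.Icc 2 (m + 2),
              (((m+2).choose j : ℕ) : ℝ) * w A γ j * t ^ j * V A γ F a (m + 2 - j) :=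
            V_rec A γ F a hA0 hm2
        _ ≤ ∑ j ∈ Finset.Icc 2 (m + 2),
              (((m+2).choose j : ℕ) : ℝ) * w A γ j * t ^ j
                * (t ^ (m + 2 - j) * RR B γ (m + 2 - j)) := by
            apply Finset.sum_le_sum
            intro j hj
            rw [Finset.mem_Icc] at hj
            apply mul_le_mul_of_nonneg_left (ih (m + 2 - j) (by omega))
            apply mul_nonneg (mul_nonneg (by positivity) (w_nonneg hA0 _)) (by positivity)
        _ = t ^ (m + 2) * ∑ j ∈ Finset.Icc 2 (m + 2),
              (((m+2).choose j : ℕ) : ℝ) * w A γ j * RR B γ (m + 2 - j) := by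
            rw [Finset.mul_sum]
            apply Finset.sum_congr rfl
            intro j hj
            rw [Finset.mem_Icc] at hj
            have : t ^ j * t ^ (m + 2 - j) = t ^ (m + 2) := by
              rw [← pow_add]
              congr 1
              omega
            calc (((m+2).choose j : ℕ) : ℝ) * w A γ j * t ^ j * (t ^ (m + 2 - j) * RR B γ (m + 2 - j))
                = (t ^ j * t ^ (m + 2 - j)) * ((((m+2).choose j : ℕ) : ℝ) * w A γ j * RR B γ (m + 2 - j)) := by
                  ring
              _ = t ^ (m + 2) * ((((m+2).choose j : ℕ) : ℝ) * w A γ j * RR B γ (m + 2 - j)) := by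
                  rw [this]
        _ ≤ t ^ (m + 2) * ∑ j ∈ Finset.Icc 2 (m + 2), ((1:ℝ)/2) ^ j * RR B γ (m + 2) := by
            apply mul_le_mul_of_nonneg_left _ (by positivity)
            apply Finset.sum_le_sum
            intro j hj
            rw [Finset.mem_Icc] at hj
            exact lemG hγ0 hγ1 hA hB hj.1 hj.2
        _ ≤ t ^ (m + 2) * RR B γ (m + 2) := by
            apply mul_le_mul_of_nonneg_left _ (by positivity)
            rw [← Finset.sum_mul]
            have h1 := sum_halves (m + 2)
            have h2 : (0:ℝ) ≤ RR B γ (m + 2) := RR_nonneg hBpos.le _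
            nlinarith [pow_nonneg (by norm_num : (0:ℝ) ≤ 1/2) (m + 3)]

section Tail

variable {C₀ c₀ γ A : ℝ}

lemma A1_ge_one (hC₀ : 0 < C₀) (hc₀ : 0 < c₀) (hγ0 : 0 < γ)
    (hAdef : A = 8 * (C₀ + 1) * (1 / (c₀ * γ) + 1)) : 1 ≤ A := by
  have h1 : 0 < c₀ * γ := mul_pos hc₀ hγ0
  have h2 : 0 < 1 / (c₀ * γ) := by positivity
  rw [hAdef]
  nlinarith

lemma tail_term_bound (hC₀ : 0 < C₀) (hc₀ : 0 < c₀) (hγ0 : 0 < γ) (hγ1 : γ ≤ 1)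
    (hAdef : A = 8 * (C₀ + 1) * (1 / (c₀ * γ) + 1)) (k j : ℕ) (hk : 1 ≤ k) :
    ((j:ℝ) + 1) ^ (k + 2) * (C₀ * Real.exp (-c₀ * (j:ℝ) ^ γ)) ≤ w A γ k / 2 := by
  have hcγ : 0 < c₀ * γ := mul_pos hc₀ hγ0
  have hA1 : 1 ≤ A := A1_ge_one hC₀ hc₀ hγ0 hAdef
  have hkk : (1:ℝ) ≤ (k:ℝ) := by exact_mod_cast hk
  have he1 : (1:ℝ) ≤ ((k:ℝ) + 2) / γ := by
    rw [le_div_iff₀ hγ0]; linarith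
  set D : ℝ := ((k:ℝ) + 2) / (c₀ * γ) with hD
  have hD0 : 0 < D := by positivity
  set e : ℝ := ((k:ℝ) + 2) / γ with hE
  have hbase : (8:ℝ) * (C₀ + 1) * (D + 1) ≤ A * ((k:ℝ) + 2) := by
    rw [hAdef, hD]
    have h2 : ((k:ℝ) + 2) / (c₀ * γ) + 1 ≤ ((k:ℝ) + 2) * (1 / (c₀ * γ) + 1) := by
      rw [mul_add, mul_one, div_eq_mul_one_div]
      linarith
    nlinarith [mul_le_mul_of_nonneg_left h2 (by positivity : (0:ℝ) ≤ 8 * (C₀ + 1))]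
  have hbase1 : (1:ℝ) ≤ 8 * (C₀ + 1) * (D + 1) := by nlinarith
  have hwk : w A γ k = (A * ((k:ℝ) + 2)) ^ e := by
    unfold w
    rw [if_neg (by omega : ¬ k = 0)]
  -- lower bound for w A γ k
  have hsplit : ((8:ℝ) * (C₀ + 1) * (D + 1)) ^ e = (8:ℝ)^e * (C₀+1)^e * (D+1)^e := by
    rw [Real.mul_rpow (by positivity) (by positivity),
      Real.mul_rpow (by positivity) (by positivity)]
  have h8 : (2:ℝ) ^ (k + 3) ≤ (8:ℝ) ^ e := by
    have h81 : (8:ℝ) ^ e = (2:ℝ) ^ (3 * e) := by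
      rw [show (8:ℝ) = (2:ℝ) ^ (3:ℝ) by
        rw [show (3:ℝ) = ((3:ℕ):ℝ) by norm_num, Real.rpow_natCast]; norm_num,
        ← Real.rpow_mul (by norm_num)]
    rw [h81, show ((2:ℝ) ^ (k + 3) : ℝ) = (2:ℝ) ^ (((k + 3 : ℕ):ℝ)) by
      rw [Real.rpow_natCast]]
    apply Real.rpow_le_rpow_of_exponent_le (by norm_num)
    push_cast
    rw [hE]
    rw [div_eq_mul_one_div]
    have : (1:ℝ) ≤ 1 / γ := by rw [le_div_iff₀ hγ0]; linarith
    nlinarith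
  have hC1 : (C₀ + 1 : ℝ) ≤ (C₀ + 1) ^ e := by
    calc (C₀ + 1 : ℝ) = (C₀ + 1) ^ (1:ℝ) := (Real.rpow_one _).symm
      _ ≤ (C₀ + 1) ^ e := Real.rpow_le_rpow_of_exponent_le (by linarith) he1
  have hD1 : D ^ e ≤ (D + 1) ^ e := Real.rpow_le_rpow hD0.le (by linarith) (by positivity)
  have hwlow : (2:ℝ) ^ (k + 3) * (C₀ + 1) * D ^ e ≤ w A γ k := by
    calc (2:ℝ) ^ (k + 3) * (C₀ + 1) * D ^ e
        ≤ (8:ℝ)^e * ((C₀+1)^e) * ((D+1)^e) := by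
          apply mul_le_mul
          · exact mul_le_mul h8 hC1 (by positivity) (by positivity)
          · exact hD1
          · positivity
          · positivity
      _ = ((8:ℝ) * (C₀ + 1) * (D + 1)) ^ e := hsplit.symm
      _ ≤ (A * ((k:ℝ) + 2)) ^ e := Real.rpow_le_rpow (by positivity) hbase (by positivity)
      _ = w A γ k := hwk.symm
  rcases Nat.eq_zero_or_pos j with rfl | hj
  · -- j = 0
    have : ((0:ℕ):ℝ) = (0:ℝ) := by norm_num
    rw [this]
    rw [Real.zero_rpow hγ0.ne', mul_zero, Real.exp_zero, mul_one]
    rw [zero_add, one_pow, one_mul]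
    have hD2 : (1:ℝ) ≤ D + 1 := by linarith
    have h2k : (4:ℝ) ≤ (2:ℝ) ^ (k + 3) := by
      calc (4:ℝ) = 2^2 := by norm_num
      _ ≤ (2:ℝ)^(k+3) := pow_le_pow_right₀ (by norm_num) (by omega)
    have hDe : (1:ℝ) ≤ (D+1)^e := Real.one_le_rpow hD2 (by positivity)
    -- C₀ ≤ w/2
    have : (4:ℝ) * C₀ ≤ w A γ k := by
      calc (4:ℝ) * C₀ ≤ (2:ℝ)^(k+3) * (C₀+1) * 1 := by nlinarith
        _ ≤ (8:ℝ)^e * ((C₀+1)^e) * ((D+1)^e) := by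
            apply mul_le_mul
            · exact mul_le_mul (le_trans (by nlinarith) h8) hC1 (by positivity) (by positivity)
            · exact hDe
            · norm_num
            · positivity
        _ = ((8:ℝ) * (C₀ + 1) * (D + 1)) ^ e := hsplit.symm
        _ ≤ (A * ((k:ℝ) + 2)) ^ e := Real.rpow_le_rpow (by positivity) hbase (by positivity)
        _ = w A γ k := hwk.symm
    linarith
  · -- j ≥ 1
    have hj1 : (1:ℝ) ≤ (j:ℝ) := by exact_mod_cast hj
    have hjpow : ((j:ℝ) + 1) ^ (k + 2) ≤ 2 ^ (k + 2) * (j:ℝ) ^ (k + 2) := by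
      rw [← mul_pow]
      apply pow_le_pow_left₀ (by positivity)
      linarith
    have hsup : (j:ℝ) ^ (k + 2) * Real.exp (-c₀ * (j:ℝ) ^ γ) ≤ D ^ e := by
      have h0j : (0:ℝ) ≤ (j:ℝ) := by positivity
      have hs : (0:ℝ) < (k:ℝ) + 2 := by linarith
      have := rpow_mul_exp_neg_le hc₀ hγ0 h0j hs
      rw [hD, hE]
      calc (j:ℝ) ^ (k + 2) * Real.exp (-c₀ * (j:ℝ) ^ γ)
          = (j:ℝ) ^ (((k:ℝ) + 2)) * Real.exp (-(c₀ * (j:ℝ) ^ γ)) := by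
            rw [show ((k:ℝ) + 2) = (((k + 2 : ℕ)):ℝ) by push_cast; ring, Real.rpow_natCast]
            rw [neg_mul]
        _ ≤ (((k:ℝ) + 2) / (c₀ * γ)) ^ (((k:ℝ) + 2) / γ) := this
    calc ((j:ℝ) + 1) ^ (k + 2) * (C₀ * Real.exp (-c₀ * (j:ℝ) ^ γ))
        ≤ 2 ^ (k + 2) * (j:ℝ) ^ (k + 2) * (C₀ * Real.exp (-c₀ * (j:ℝ) ^ γ)) := by
          apply mul_le_mul_of_nonneg_right hjpow (by positivity)
      _ = 2 ^ (k + 2) * C₀ * ((j:ℝ) ^ (k + 2) * Real.exp (-c₀ * (j:ℝ) ^ γ)) := by ring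
      _ ≤ 2 ^ (k + 2) * C₀ * D ^ e := by
          apply mul_le_mul_of_nonneg_left hsup (by positivity)
      _ ≤ w A γ k / 2 := by
          have hpow : ((2:ℝ)) ^ (k + 3) = 2 * 2 ^ (k + 2) := by ring
          have hDe : (0:ℝ) ≤ D ^ e := Real.rpow_nonneg hD0.le e
          have h2p : (0:ℝ) < 2 ^ (k + 2) := pow_pos (by norm_num) (k + 2)
          rw [le_div_iff₀ (by norm_num : (0:ℝ) < 2)]
          calc 2 ^ (k + 2) * C₀ * D ^ e * 2 = 2 * 2 ^ (k + 2) * (C₀ * D ^ e) := by ring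
            _ ≤ 2 * 2 ^ (k + 2) * ((C₀ + 1) * D ^ e) := by
                apply mul_le_mul_of_nonneg_left _ (by positivity)
                apply mul_le_mul_of_nonneg_right (by linarith) hDe
            _ = 2 ^ (k + 3) * (C₀ + 1) * D ^ e := by rw [hpow]; ring
            _ ≤ w A γ k := hwlow

end Tail

section Moments

lemma sum_inv_sq : ∀ n : ℕ, ∑ j ∈ Finset.range n, (1 / ((j:ℝ) + 1) ^ 2) ≤ 2 - 2 / ((n:ℝ) + 1)
  | 0 => by norm_num
  | (n + 1) => by
    rw [Finset.sum_range_succ]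
    have ih := sum_inv_sq n
    have h1 : (0:ℝ) < (n:ℝ) + 1 := by positivity
    have key : 1 / ((n:ℝ) + 1) ^ 2 ≤ 2 / ((n:ℝ) + 1) - 2 / ((n:ℝ) + 1 + 1) := by
      rw [div_sub_div _ _ h1.ne' (by positivity), div_le_div_iff₀ (by positivity) (by positivity)]
      nlinarith
    have hcast : ((n + 1 : ℕ):ℝ) = (n:ℝ) + 1 := by push_cast; ring
    rw [hcast]
    linarith

lemma tsum_ofReal_inv_sq : (∑' j : ℕ, ENNReal.ofReal (1 / ((j:ℝ) + 1) ^ 2)) ≤ 2 := by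
  rw [ENNReal.tsum_eq_iSup_sum]
  apply iSup_le
  intro s
  rcases s.eq_empty_or_nonempty with rfl | hne
  · simp
  · obtain ⟨n, hn⟩ := s.exists_le
    calc ∑ j ∈ s, ENNReal.ofReal (1 / ((j:ℝ) + 1) ^ 2)
        ≤ ∑ j ∈ Finset.range (n + 1), ENNReal.ofReal (1 / ((j:ℝ) + 1) ^ 2) := by
          apply Finset.sum_le_sum_of_subset
          intro j hj
          rw [Finset.mem_range]
          exact Nat.lt_succ_of_le (hn j hj)
      _ = ENNReal.ofReal (∑ j ∈ Finset.range (n + 1), (1 / ((j:ℝ) + 1) ^ 2)) := by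
          rw [ENNReal.ofReal_sum_of_nonneg]
          intro j _
          positivity
      _ ≤ ENNReal.ofReal 2 := by
          apply ENNReal.ofReal_le_ofReal
          have := sum_inv_sq (n + 1)
          have h1 : (0:ℝ) ≤ 2 / (((n+1:ℕ):ℝ) + 1) := by positivity
          linarith
      _ = 2 := by norm_num

variable {Ω : Type} [MeasurableSpace Ω] {μ : MeasureTheory.Measure Ω}
  {C₀ c₀ γ A : ℝ}

lemma lintegral_nnnorm_pow_le [MeasureTheory.IsProbabilityMeasure μ]
    {X : Ω → ℝ} (hX : Measurable X)
    (hC₀ : 0 < C₀) (hc₀ : 0 < c₀) (hγ0 : 0 < γ) (hγ1 : γ ≤ 1)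
    (hAdef : A = 8 * (C₀ + 1) * (1 / (c₀ * γ) + 1))
    (htail : ∀ ρ : ℝ, 0 ≤ ρ → μ {ω | ρ ≤ |X ω|} ≤ ENNReal.ofReal (C₀ * Real.exp (-c₀ * ρ ^ γ)))
    (k : ℕ) (hk : 1 ≤ k) :
    ∫⁻ ω, (‖X ω‖₊ : ℝ≥0∞) ^ k ∂μ ≤ ENNReal.ofReal (w A γ k) := by
  have hw0 : 0 ≤ w A γ k := w_nonneg (by
    have := A1_ge_one hC₀ hc₀ hγ0 hAdef; linarith) k
  set s : ℕ → Set Ω := fun j => {ω | (j:ℝ) ≤ |X ω|} ∩ {ω | |X ω| < (j:ℝ) + 1} with hsdef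
  have hsm : ∀ j, MeasurableSet (s j) := by
    intro j
    apply MeasurableSet.inter
    · exact measurableSet_le measurable_const hX.abs
    · exact measurableSet_lt hX.abs measurable_const
  have hpt : ∀ ω, (‖X ω‖₊ : ℝ≥0∞) ^ k
      ≤ ∑' j : ℕ, Set.indicator (s j) (fun _ => ((j:ℝ≥0∞) + 1) ^ k) ω := by
    intro ω
    set j₀ := ⌊|X ω|⌋₊ with hj₀
    have hmem : ω ∈ s j₀ := by
      refine Set.mem_inter ?_ ?_
      · show (j₀:ℝ) ≤ |X ω|
        exact Nat.floor_le (abs_nonneg _)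
      · show |X ω| < (j₀:ℝ) + 1
        exact Nat.lt_floor_add_one _
    have hval : Set.indicator (s j₀) (fun _ => ((j₀:ℝ≥0∞) + 1) ^ k) ω = ((j₀:ℝ≥0∞) + 1) ^ k :=
      Set.indicator_of_mem hmem _
    have hle : (‖X ω‖₊ : ℝ≥0∞) ^ k ≤ ((j₀:ℝ≥0∞) + 1) ^ k := by
      apply pow_le_pow_left₀ zero_le
      rw [← enorm_eq_nnnorm, ← ofReal_norm, Real.norm_eq_abs]
      calc ENNReal.ofReal |X ω| ≤ ENNReal.ofReal ((j₀:ℝ) + 1) :=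
            ENNReal.ofReal_le_ofReal (Nat.lt_floor_add_one _).le
        _ = (j₀:ℝ≥0∞) + 1 := by
            rw [ENNReal.ofReal_add (by positivity) (by norm_num)]
            rw [ENNReal.ofReal_natCast, ENNReal.ofReal_one]
    calc (‖X ω‖₊ : ℝ≥0∞) ^ k ≤ ((j₀:ℝ≥0∞) + 1) ^ k := hle
      _ = Set.indicator (s j₀) (fun _ => ((j₀:ℝ≥0∞) + 1) ^ k) ω := hval.symm
      _ ≤ ∑' j : ℕ, Set.indicator (s j) (fun _ => ((j:ℝ≥0∞) + 1) ^ k) ω := ENNReal.le_tsum j₀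
  calc ∫⁻ ω, (‖X ω‖₊ : ℝ≥0∞) ^ k ∂μ
      ≤ ∫⁻ ω, ∑' j : ℕ, Set.indicator (s j) (fun _ => ((j:ℝ≥0∞) + 1) ^ k) ω ∂μ :=
        MeasureTheory.lintegral_mono hpt
    _ = ∑' j : ℕ, ∫⁻ ω, Set.indicator (s j) (fun _ => ((j:ℝ≥0∞) + 1) ^ k) ω ∂μ := by
        apply MeasureTheory.lintegral_tsum
        intro j
        exact ((measurable_const.indicator (hsm j)).aemeasurable)
    _ = ∑' j : ℕ, ((j:ℝ≥0∞) + 1) ^ k * μ (s j) := by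
        apply tsum_congr
        intro j
        rw [MeasureTheory.lintegral_indicator (hsm j), MeasureTheory.setLIntegral_const]
    _ ≤ ∑' j : ℕ, ENNReal.ofReal (w A γ k / 2 * (1 / ((j:ℝ) + 1) ^ 2)) := by
        apply ENNReal.tsum_le_tsum
        intro j
        have h1 : μ (s j) ≤ ENNReal.ofReal (C₀ * Real.exp (-c₀ * (j:ℝ) ^ γ)) := by
          refine le_trans (MeasureTheory.measure_mono Set.inter_subset_left) ?_
          exact htail (j:ℝ) (by positivity)
        have h2 : ((j:ℝ≥0∞) + 1) ^ k = ENNReal.ofReal (((j:ℝ) + 1) ^ k) := by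
          rw [ENNReal.ofReal_pow (by positivity)]
          congr 1
          rw [ENNReal.ofReal_add (by positivity) (by norm_num)]
          rw [ENNReal.ofReal_natCast, ENNReal.ofReal_one]
        calc ((j:ℝ≥0∞) + 1) ^ k * μ (s j)
            ≤ ENNReal.ofReal (((j:ℝ) + 1) ^ k) * ENNReal.ofReal (C₀ * Real.exp (-c₀ * (j:ℝ) ^ γ)) := by
              rw [h2]
              exact mul_le_mul_right h1 _
          _ = ENNReal.ofReal (((j:ℝ) + 1) ^ k * (C₀ * Real.exp (-c₀ * (j:ℝ) ^ γ))) := by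
              rw [← ENNReal.ofReal_mul (by positivity)]
          _ ≤ ENNReal.ofReal (w A γ k / 2 * (1 / ((j:ℝ) + 1) ^ 2)) := by
              apply ENNReal.ofReal_le_ofReal
              have hb := tail_term_bound hC₀ hc₀ hγ0 hγ1 hAdef k j hk
              have hj1 : (0:ℝ) < ((j:ℝ) + 1) ^ 2 := by positivity
              rw [mul_one_div, le_div_iff₀ hj1]
              calc ((j:ℝ) + 1) ^ k * (C₀ * Real.exp (-c₀ * (j:ℝ) ^ γ)) * ((j:ℝ) + 1) ^ 2
                  = ((j:ℝ) + 1) ^ (k + 2) * (C₀ * Real.exp (-c₀ * (j:ℝ) ^ γ)) := by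
                    rw [pow_add]; ring
                _ ≤ w A γ k / 2 := hb
    _ = ENNReal.ofReal (w A γ k / 2) * ∑' j : ℕ, ENNReal.ofReal (1 / ((j:ℝ) + 1) ^ 2) := by
        rw [← ENNReal.tsum_mul_left]
        apply tsum_congr
        intro j
        rw [← ENNReal.ofReal_mul (by positivity)]
    _ ≤ ENNReal.ofReal (w A γ k / 2) * 2 := by
        exact mul_le_mul_right tsum_ofReal_inv_sq _
    _ ≤ ENNReal.ofReal (w A γ k) := by
        rw [show (2:ℝ≥0∞) = ENNReal.ofReal 2 by norm_num, ← ENNReal.ofReal_mul (by positivity)]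
        apply ENNReal.ofReal_le_ofReal
        linarith

lemma integrable_pow_tail [MeasureTheory.IsProbabilityMeasure μ]
    {X : Ω → ℝ} (hX : Measurable X)
    (hC₀ : 0 < C₀) (hc₀ : 0 < c₀) (hγ0 : 0 < γ) (hγ1 : γ ≤ 1)
    (hAdef : A = 8 * (C₀ + 1) * (1 / (c₀ * γ) + 1))
    (htail : ∀ ρ : ℝ, 0 ≤ ρ → μ {ω | ρ ≤ |X ω|} ≤ ENNReal.ofReal (C₀ * Real.exp (-c₀ * ρ ^ γ)))
    (k : ℕ) : MeasureTheory.Integrable (fun ω => X ω ^ k) μ := by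
  rcases Nat.eq_zero_or_pos k with rfl | hk
  · simp only [pow_zero]
    exact MeasureTheory.integrable_const 1
  refine ⟨(hX.pow_const k).aestronglyMeasurable, ?_⟩
  show (∫⁻ ω, (‖X ω ^ k‖₊ : ℝ≥0∞) ∂μ) < ⊤
  have heq : ∀ ω, (‖X ω ^ k‖₊ : ℝ≥0∞) = (‖X ω‖₊ : ℝ≥0∞) ^ k := by
    intro ω
    rw [nnnorm_pow, ENNReal.coe_pow]
  calc ∫⁻ ω, (‖X ω ^ k‖₊ : ℝ≥0∞) ∂μ = ∫⁻ ω, (‖X ω‖₊ : ℝ≥0∞) ^ k ∂μ := by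
        apply MeasureTheory.lintegral_congr heq
    _ ≤ ENNReal.ofReal (w A γ k) :=
        lintegral_nnnorm_pow_le hX hC₀ hc₀ hγ0 hγ1 hAdef htail k hk
    _ < ⊤ := ENNReal.ofReal_lt_top

lemma abs_integral_pow_le [MeasureTheory.IsProbabilityMeasure μ]
    {X : Ω → ℝ} (hX : Measurable X)
    (hC₀ : 0 < C₀) (hc₀ : 0 < c₀) (hγ0 : 0 < γ) (hγ1 : γ ≤ 1)
    (hAdef : A = 8 * (C₀ + 1) * (1 / (c₀ * γ) + 1))
    (htail : ∀ ρ : ℝ, 0 ≤ ρ → μ {ω | ρ ≤ |X ω|} ≤ ENNReal.ofReal (C₀ * Real.exp (-c₀ * ρ ^ γ)))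
    (k : ℕ) : |∫ ω, X ω ^ k ∂μ| ≤ w A γ k := by
  have hw0 : 0 ≤ w A γ k := w_nonneg (by
    have := A1_ge_one hC₀ hc₀ hγ0 hAdef; linarith) k
  rcases Nat.eq_zero_or_pos k with rfl | hk
  · simp only [pow_zero, MeasureTheory.integral_const, MeasureTheory.measure_univ,
      ENNReal.toReal_one, smul_eq_mul, one_mul, mul_one]
    unfold w
    norm_num
  calc |∫ ω, X ω ^ k ∂μ| ≤ ∫ ω, |X ω ^ k| ∂μ := by
        simpa [Real.norm_eq_abs] using
          MeasureTheory.norm_integral_le_integral_norm (μ := μ) (fun ω => X ω ^ k)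
    _ = (∫⁻ ω, ENNReal.ofReal (|X ω ^ k|) ∂μ).toReal := by
        apply MeasureTheory.integral_eq_lintegral_of_nonneg_ae
        · exact Filter.Eventually.of_forall (fun ω => abs_nonneg _)
        · exact ((hX.pow_const k).abs).aestronglyMeasurable
    _ ≤ w A γ k := by
        apply ENNReal.toReal_le_of_le_ofReal hw0
        have heq : ∀ ω, ENNReal.ofReal (|X ω ^ k|) = (‖X ω‖₊ : ℝ≥0∞) ^ k := by
          intro ω
          rw [← Real.norm_eq_abs, ofReal_norm, enorm_eq_nnnorm, nnnorm_pow, ENNReal.coe_pow]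
        calc ∫⁻ ω, ENNReal.ofReal (|X ω ^ k|) ∂μ = ∫⁻ ω, (‖X ω‖₊ : ℝ≥0∞) ^ k ∂μ :=
              MeasureTheory.lintegral_congr heq
          _ ≤ ENNReal.ofReal (w A γ k) :=
              lintegral_nnnorm_pow_le hX hC₀ hc₀ hγ0 hγ1 hAdef htail k hk

end Moments

section Indep

open MeasureTheory ProbabilityTheory

variable {Ω : Type} [MeasurableSpace Ω] {μ : Measure Ω} [IsProbabilityMeasure μ]
  {g : ℕ → Ω → ℝ}

lemma prod_pow_integral (hmeas : ∀ n, Measurable (g n))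
    (hindep : iIndepFun g μ)
    (hint : ∀ n k, Integrable (fun ω => g n ω ^ k) μ) (k : ℕ → ℕ) (F : Finset ℕ) :
    Integrable (fun ω => ∏ n ∈ F, g n ω ^ k n) μ ∧
      ∫ ω, ∏ n ∈ F, g n ω ^ k n ∂μ = ∏ n ∈ F, ∫ ω, g n ω ^ k n ∂μ := by
  classical
  have hiid : iIndepFun (fun n ω => g n ω ^ k n) μ :=
    hindep.comp (fun n => fun x : ℝ => x ^ k n) (fun n => measurable_id.pow_const (k n))
  have hmeas' : ∀ n, Measurable (fun ω => g n ω ^ k n) := fun n => (hmeas n).pow_const (k n)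
  induction F using Finset.cons_induction with
  | empty =>
    constructor
    · simpa using integrable_const (1:ℝ)
    · simp
  | cons a s ha ih =>
    have hIndep0 : IndepFun (∏ j ∈ s, (fun n ω => g n ω ^ k n) j)
        ((fun n ω => g n ω ^ k n) a) μ :=
      hiid.indepFun_finsetProd_of_notMem hmeas' ha
    have hprodeq : (∏ j ∈ s, (fun n ω => g n ω ^ k n) j) = fun ω => ∏ n ∈ s, g n ω ^ k n := by
      funext ω
      rw [Finset.prod_apply]
    have hIndep : IndepFun (fun ω => g a ω ^ k a) (fun ω => ∏ n ∈ s, g n ω ^ k n) μ := by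
      rw [hprodeq] at hIndep0
      exact hIndep0.symm
    have hint_prod : Integrable (fun ω => ∏ n ∈ s, g n ω ^ k n) μ := ih.1
    have hmul : Integrable (fun ω => g a ω ^ k a * ∏ n ∈ s, g n ω ^ k n) μ :=
      hIndep.integrable_mul (hint a (k a)) hint_prod
    have hval : ∫ ω, g a ω ^ k a * ∏ n ∈ s, g n ω ^ k n ∂μ
        = (∫ ω, g a ω ^ k a ∂μ) * ∫ ω, ∏ n ∈ s, g n ω ^ k n ∂μ :=
      hIndep.integral_mul_eq_mul_integral (hint a (k a)).1 hint_prod.1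
    constructor
    · have : (fun ω => ∏ n ∈ Finset.cons a s ha, g n ω ^ k n)
          = fun ω => g a ω ^ k a * ∏ n ∈ s, g n ω ^ k n := by
        funext ω
        rw [Finset.prod_cons]
      rw [this]
      exact hmul
    · calc ∫ ω, ∏ n ∈ Finset.cons a s ha, g n ω ^ k n ∂μ
          = ∫ ω, g a ω ^ k a * ∏ n ∈ s, g n ω ^ k n ∂μ := by
            congr 1
            funext ω
            rw [Finset.prod_cons]
        _ = (∫ ω, g a ω ^ k a ∂μ) * ∫ ω, ∏ n ∈ s, g n ω ^ k n ∂μ := hval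
        _ = ∏ n ∈ Finset.cons a s ha, ∫ ω, g n ω ^ k n ∂μ := by
            rw [Finset.prod_cons, ih.2]

end Indep

section Expand

open MeasureTheory ProbabilityTheory

variable {Ω : Type} [MeasurableSpace Ω] {μ : Measure Ω} [IsProbabilityMeasure μ]
  {g : ℕ → Ω → ℝ} {A γ : ℝ}

lemma integral_sum_pow_le (hmeas : ∀ n, Measurable (g n))
    (hindep : iIndepFun g μ)
    (hint : ∀ n k, Integrable (fun ω => g n ω ^ k) μ)
    (hcent : ∀ n, (∫ ω, g n ω ∂μ) = 0)
    (hA : 1 ≤ A)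
    (habs : ∀ n k, |∫ ω, g n ω ^ k ∂μ| ≤ w A γ k)
    (a : ℕ → ℝ) (F : Finset ℕ) (m : ℕ) :
    Integrable (fun ω => (∑ n ∈ F, a n * g n ω) ^ m) μ ∧
      ∫ ω, (∑ n ∈ F, a n * g n ω) ^ m ∂μ ≤ V A γ F a m := by
  classical
  have hA0 : (0:ℝ) ≤ A := by linarith
  have h1 : (fun ω => (∑ n ∈ F, a n * g n ω) ^ m)
      = fun ω => ∑ k ∈ F.piAntidiag m,
          ((Nat.multinomial F k : ℕ) : ℝ) * ((∏ n ∈ F, a n ^ k n) * ∏ n ∈ F, g n ω ^ k n) := by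
    funext ω
    rw [Finset.sum_pow_eq_sum_piAntidiag]
    apply Finset.sum_congr rfl
    intro k _
    congr 1
    rw [← Finset.prod_mul_distrib]
    apply Finset.prod_congr rfl
    intro n _
    rw [mul_pow]
  have hint_term : ∀ k : ℕ → ℕ,
      Integrable (fun ω => ((Nat.multinomial F k : ℕ) : ℝ)
        * ((∏ n ∈ F, a n ^ k n) * ∏ n ∈ F, g n ω ^ k n)) μ := by
    intro k
    exact ((prod_pow_integral hmeas hindep hint k F).1.const_mul _).const_mul _
  have hintg : Integrable (fun ω => (∑ n ∈ F, a n * g n ω) ^ m) μ := by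
    rw [h1]
    apply integrable_finset_sum
    intro k _
    exact hint_term k
  refine ⟨hintg, ?_⟩
  have h2 : ∫ ω, (∑ n ∈ F, a n * g n ω) ^ m ∂μ
      = ∑ k ∈ F.piAntidiag m, ((Nat.multinomial F k : ℕ) : ℝ)
          * ((∏ n ∈ F, a n ^ k n) * ∏ n ∈ F, ∫ ω, g n ω ^ k n ∂μ) := by
    rw [h1, integral_finset_sum _ (fun k _ => hint_term k)]
    apply Finset.sum_congr rfl
    intro k _
    rw [integral_const_mul, integral_const_mul, (prod_pow_integral hmeas hindep hint k F).2]
  rw [h2]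
  rw [← Finset.sum_filter_add_sum_filter_not (F.piAntidiag m) (fun k => ∀ n ∈ F, k n ≠ 1)]
  have hvanish : ∑ k ∈ (F.piAntidiag m).filter (fun k => ¬ ∀ n ∈ F, k n ≠ 1),
      ((Nat.multinomial F k : ℕ) : ℝ)
        * ((∏ n ∈ F, a n ^ k n) * ∏ n ∈ F, ∫ ω, g n ω ^ k n ∂μ) = 0 := by
    apply Finset.sum_eq_zero
    intro k hk
    rw [Finset.mem_filter] at hk
    push_neg at hk
    obtain ⟨n, hnF, hkn⟩ := hk.2
    have : ∏ n ∈ F, ∫ ω, g n ω ^ k n ∂μ = 0 := by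
      apply Finset.prod_eq_zero hnF
      simp only [hkn, pow_one]
      exact hcent n
    rw [this]
    ring
  rw [hvanish, add_zero]
  unfold V
  apply Finset.sum_le_sum
  intro k hk
  unfold T
  have hmn : (0:ℝ) ≤ ((Nat.multinomial F k : ℕ) : ℝ) := by positivity
  apply mul_le_mul_of_nonneg_left _ hmn
  calc (∏ n ∈ F, a n ^ k n) * ∏ n ∈ F, ∫ ω, g n ω ^ k n ∂μ
      ≤ |(∏ n ∈ F, a n ^ k n) * ∏ n ∈ F, ∫ ω, g n ω ^ k n ∂μ| := le_abs_self _
    _ = (∏ n ∈ F, |a n ^ k n|) * ∏ n ∈ F, |∫ ω, g n ω ^ k n ∂μ| := by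
        rw [abs_mul, Finset.abs_prod, Finset.abs_prod]
    _ ≤ (∏ n ∈ F, |a n| ^ k n) * ∏ n ∈ F, w A γ (k n) := by
        apply mul_le_mul
        · apply le_of_eq
          apply Finset.prod_congr rfl
          intro n _
          rw [abs_pow]
        · apply Finset.prod_le_prod
          · intro n _; positivity
          · intro n _; exact habs n (k n)
        · positivity
        · apply Finset.prod_nonneg
          intro n _
          positivity
    _ = ∏ n ∈ F, (|a n| ^ k n * w A γ (k n)) := by
        rw [← Finset.prod_mul_distrib]

end Expand

lemma add_pow_le_two_pow_mul {x y : ℝ} (hx : 0 ≤ x) (hy : 0 ≤ y) (p : ℕ) :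
    (x + y) ^ p ≤ 2 ^ p * (x ^ p + y ^ p) := by
  rcases le_total x y with h | h
  · calc (x + y) ^ p ≤ (2 * y) ^ p := pow_le_pow_left₀ (by linarith) (by linarith) p
      _ = 2 ^ p * y ^ p := by rw [mul_pow]
      _ ≤ 2 ^ p * (x ^ p + y ^ p) := by
          apply mul_le_mul_of_nonneg_left _ (by positivity)
          have : 0 ≤ x ^ p := by positivity
          linarith
  · calc (x + y) ^ p ≤ (2 * x) ^ p := pow_le_pow_left₀ (by linarith) (by linarith) p
      _ = 2 ^ p * x ^ p := by rw [mul_pow]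
      _ ≤ 2 ^ p * (x ^ p + y ^ p) := by
          apply mul_le_mul_of_nonneg_left _ (by positivity)
          have : 0 ≤ y ^ p := by positivity
          linarith

end Stmt16

open MeasureTheory ProbabilityTheory

/-- Moment bound for linear combinations with complex coefficients of independent
centered random variables with a common stretched-exponential tail bound of exponent
`γ ∈ (0,1]`: `E[|∑ cₙ gₙ|^{2p}] ≤ (Cp)^{2p(2γ+3)/(3γ)} (∑ |cₙ|²)^p`. -/
theorem stmt_16 (C₀ c₀ γ : ℝ) (hC₀ : 0 < C₀) (hc₀ : 0 < c₀) (hγ0 : 0 < γ) (hγ1 : γ ≤ 1) :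
    ∃ C : ℝ, 0 < C ∧
      ∀ (Ω : Type) (_ : MeasurableSpace Ω) (μ : Measure Ω), IsProbabilityMeasure μ →
        ∀ g : ℕ → Ω → ℝ, (∀ n, Measurable (g n)) →
          iIndepFun g μ →
          (∀ n, Integrable (g n) μ) → (∀ n, (∫ ω, g n ω ∂μ) = 0) →
          (∀ n, ∀ ρ : ℝ, 0 ≤ ρ →
            μ {ω | ρ ≤ |g n ω|} ≤ ENNReal.ofReal (C₀ * Real.exp (-c₀ * ρ ^ γ))) →
          ∀ (p : ℕ), 1 ≤ p → ∀ (F : Finset ℕ) (cs : ℕ → ℂ),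
            ∫ ω, ‖∑ n ∈ F, cs n * (g n ω : ℂ)‖ ^ (2 * p) ∂μ ≤
              (C * p) ^ ((2 * (p : ℝ) * (2 * γ + 3)) / (3 * γ)) *
                (∑ n ∈ F, ‖cs n‖ ^ 2) ^ p := by
  classical
  set A : ℝ := 8 * (C₀ + 1) * (1 / (c₀ * γ) + 1) with hAdef
  have hA : 1 ≤ A := Stmt16.A1_ge_one hC₀ hc₀ hγ0 hAdef
  set B : ℝ := (16 * Real.exp 1 * A) ^ ((3:ℝ) / γ) with hBdef
  have hBpos : 0 < B := Stmt16.B_pos hγ0 hγ1 hA hBdef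
  refine ⟨8 * B, by positivity, ?_⟩
  intro Ω mΩ μ hprob g hmeas hindep hintg hcent htail p hp F cs
  haveI := hprob
  have hint : ∀ n k, Integrable (fun ω => g n ω ^ k) μ := fun n k =>
    Stmt16.integrable_pow_tail (hmeas n) hC₀ hc₀ hγ0 hγ1 hAdef (htail n) k
  have habs : ∀ n k, |∫ ω, g n ω ^ k ∂μ| ≤ Stmt16.w A γ k := fun n k =>
    Stmt16.abs_integral_pow_le (hmeas n) hC₀ hc₀ hγ0 hγ1 hAdef (htail n) k
  set ar : ℕ → ℝ := fun n => (cs n).re with har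
  set ai : ℕ → ℝ := fun n => (cs n).im with hai
  have hre := Stmt16.integral_sum_pow_le hmeas hindep hint hcent hA habs ar F (2 * p)
  have him := Stmt16.integral_sum_pow_le hmeas hindep hint hcent hA habs ai F (2 * p)
  -- pointwise bound
  have hpt : ∀ ω, ‖∑ n ∈ F, cs n * (g n ω : ℂ)‖ ^ (2 * p)
      ≤ 2 ^ p * ((∑ n ∈ F, ar n * g n ω) ^ (2 * p) + (∑ n ∈ F, ai n * g n ω) ^ (2 * p)) := by
    intro ω
    set z := ∑ n ∈ F, cs n * (g n ω : ℂ) with hz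
    have hzre : z.re = ∑ n ∈ F, ar n * g n ω := by
      rw [hz, Complex.re_sum]
      apply Finset.sum_congr rfl
      intro n _
      simp [Complex.mul_re, har]
    have hzim : z.im = ∑ n ∈ F, ai n * g n ω := by
      rw [hz, Complex.im_sum]
      apply Finset.sum_congr rfl
      intro n _
      simp [Complex.mul_im, hai]
    have hnorm : ‖z‖ ^ (2 * p) = (z.re ^ 2 + z.im ^ 2) ^ p := by
      rw [pow_mul]
      congr 1
      rw [Complex.sq_norm, Complex.normSq_apply]
      ring
    rw [hnorm, hzre, hzim]
    calc ((∑ n ∈ F, ar n * g n ω) ^ 2 + (∑ n ∈ F, ai n * g n ω) ^ 2) ^ p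
        ≤ 2 ^ p * (((∑ n ∈ F, ar n * g n ω) ^ 2) ^ p + ((∑ n ∈ F, ai n * g n ω) ^ 2) ^ p) :=
          Stmt16.add_pow_le_two_pow_mul (sq_nonneg _) (sq_nonneg _) p
      _ = 2 ^ p * ((∑ n ∈ F, ar n * g n ω) ^ (2 * p) + (∑ n ∈ F, ai n * g n ω) ^ (2 * p)) := by
          rw [← pow_mul, ← pow_mul]
  have hRHSint : Integrable (fun ω => 2 ^ p *
      ((∑ n ∈ F, ar n * g n ω) ^ (2 * p) + (∑ n ∈ F, ai n * g n ω) ^ (2 * p))) μ :=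
    (hre.1.add him.1).const_mul _
  have hmono : ∫ ω, ‖∑ n ∈ F, cs n * (g n ω : ℂ)‖ ^ (2 * p) ∂μ
      ≤ ∫ ω, 2 ^ p * ((∑ n ∈ F, ar n * g n ω) ^ (2 * p)
          + (∑ n ∈ F, ai n * g n ω) ^ (2 * p)) ∂μ := by
    apply integral_mono_of_nonneg
    · exact Filter.Eventually.of_forall (fun ω => by positivity)
    · exact hRHSint
    · exact Filter.Eventually.of_forall hpt
  have hsplit : ∫ ω, 2 ^ p * ((∑ n ∈ F, ar n * g n ω) ^ (2 * p)
          + (∑ n ∈ F, ai n * g n ω) ^ (2 * p)) ∂μ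
      = 2 ^ p * ((∫ ω, (∑ n ∈ F, ar n * g n ω) ^ (2 * p) ∂μ)
          + ∫ ω, (∑ n ∈ F, ai n * g n ω) ^ (2 * p) ∂μ) := by
    rw [integral_const_mul, integral_add hre.1 him.1]
  -- V bounds
  have hVre := Stmt16.V_le hγ0 hγ1 hA hBdef F ar (2 * p)
  have hVim := Stmt16.V_le hγ0 hγ1 hA hBdef F ai (2 * p)
  set Q : ℝ := ∑ n ∈ F, ‖cs n‖ ^ 2 with hQ
  have hQ0 : 0 ≤ Q := by
    apply Finset.sum_nonneg; intro n _; positivity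
  have hsum_re : ∑ n ∈ F, ar n ^ 2 ≤ Q := by
    apply Finset.sum_le_sum
    intro n _
    have h1 : ‖cs n‖ ^ 2 = (cs n).re ^ 2 + (cs n).im ^ 2 := by
      rw [Complex.sq_norm, Complex.normSq_apply]
      ring
    rw [h1]
    nlinarith [sq_nonneg ((cs n).im)]
  have hsum_im : ∑ n ∈ F, ai n ^ 2 ≤ Q := by
    apply Finset.sum_le_sum
    intro n _
    have h1 : ‖cs n‖ ^ 2 = (cs n).re ^ 2 + (cs n).im ^ 2 := by
      rw [Complex.sq_norm, Complex.normSq_apply]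
      ring
    rw [h1]
    nlinarith [sq_nonneg ((cs n).re)]
  have hRRnn : 0 ≤ Stmt16.RR B γ (2 * p) := Stmt16.RR_nonneg hBpos.le _
  have hsqrt_re : Real.sqrt (∑ n ∈ F, ar n ^ 2) ^ (2 * p) ≤ Q ^ p := by
    rw [pow_mul, Real.sq_sqrt (by positivity : (0:ℝ) ≤ ∑ n ∈ F, ar n ^ 2)]
    exact pow_le_pow_left₀ (by positivity) hsum_re p
  have hsqrt_im : Real.sqrt (∑ n ∈ F, ai n ^ 2) ^ (2 * p) ≤ Q ^ p := by
    rw [pow_mul, Real.sq_sqrt (by positivity : (0:ℝ) ≤ ∑ n ∈ F, ai n ^ 2)]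
    exact pow_le_pow_left₀ (by positivity) hsum_im p
  have hVre' : Stmt16.V A γ F ar (2 * p) ≤ Q ^ p * Stmt16.RR B γ (2 * p) :=
    hVre.trans (mul_le_mul_of_nonneg_right hsqrt_re hRRnn)
  have hVim' : Stmt16.V A γ F ai (2 * p) ≤ Q ^ p * Stmt16.RR B γ (2 * p) :=
    hVim.trans (mul_le_mul_of_nonneg_right hsqrt_im hRRnn)
  set E : ℝ := (2 * (p : ℝ) * (2 * γ + 3)) / (3 * γ) with hE
  have hEeq : Stmt16.al γ * ((2 * p : ℕ):ℝ) = E := by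
    rw [hE]
    unfold Stmt16.al
    push_cast
    field_simp
    ring
  have hfinal_arith : 2 ^ (p + 1) * Stmt16.RR B γ (2 * p) ≤ (8 * B * (p:ℝ)) ^ E := by
    have hp1 : (1:ℝ) ≤ (p:ℝ) := by exact_mod_cast hp
    have h2Bp : (0:ℝ) < 2 * B * (p:ℝ) := by positivity
    have hRReq : Stmt16.RR B γ (2 * p) = (2 * B * (p:ℝ)) ^ E := by
      unfold Stmt16.RR
      rw [hEeq]
      congr 1
      push_cast
      ring
    have hCp : (8 * B * (p:ℝ)) = 4 * (2 * B * (p:ℝ)) := by ring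
    have hsplit4 : (8 * B * (p:ℝ)) ^ E = (4:ℝ) ^ E * (2 * B * (p:ℝ)) ^ E := by
      rw [hCp, Real.mul_rpow (by norm_num) h2Bp.le]
    have hal1 : (1:ℝ) ≤ Stmt16.al γ := by
      unfold Stmt16.al
      have : (1:ℝ) ≤ 1 / γ := by rw [le_div_iff₀ hγ0]; linarith
      linarith
    have hE2p : ((2 * p : ℕ):ℝ) ≤ E := by
      rw [← hEeq]
      nth_rewrite 1 [← one_mul ((2 * p : ℕ):ℝ)]
      apply mul_le_mul_of_nonneg_right hal1 (by positivity)
    have h4E : (2:ℝ) ^ (p + 1) ≤ (4:ℝ) ^ E := by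
      calc (2:ℝ) ^ (p + 1) ≤ (2:ℝ) ^ (4 * p) := by
            apply pow_le_pow_right₀ (by norm_num)
            omega
        _ = (4:ℝ) ^ (2 * p) := by
            rw [show (4:ℝ) = 2 ^ 2 by norm_num, ← pow_mul]
            congr 1
            ring
        _ = (4:ℝ) ^ (((2 * p : ℕ)):ℝ) := by rw [Real.rpow_natCast]
        _ ≤ (4:ℝ) ^ E := Real.rpow_le_rpow_of_exponent_le (by norm_num) hE2p
    calc 2 ^ (p + 1) * Stmt16.RR B γ (2 * p) = 2 ^ (p + 1) * (2 * B * (p:ℝ)) ^ E := by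
          rw [hRReq]
      _ ≤ (4:ℝ) ^ E * (2 * B * (p:ℝ)) ^ E := by
          apply mul_le_mul_of_nonneg_right h4E (Real.rpow_nonneg h2Bp.le E)
      _ = (8 * B * (p:ℝ)) ^ E := hsplit4.symm
  calc ∫ ω, ‖∑ n ∈ F, cs n * (g n ω : ℂ)‖ ^ (2 * p) ∂μ
      ≤ 2 ^ p * ((∫ ω, (∑ n ∈ F, ar n * g n ω) ^ (2 * p) ∂μ)
          + ∫ ω, (∑ n ∈ F, ai n * g n ω) ^ (2 * p) ∂μ) := by
        rw [← hsplit]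
        exact hmono
    _ ≤ 2 ^ p * ((Q ^ p * Stmt16.RR B γ (2 * p)) + Q ^ p * Stmt16.RR B γ (2 * p)) := by
        apply mul_le_mul_of_nonneg_left _ (by positivity)
        exact add_le_add (hre.2.trans hVre') (him.2.trans hVim')
    _ = 2 ^ (p + 1) * Stmt16.RR B γ (2 * p) * Q ^ p := by ring
    _ ≤ (8 * B * (p:ℝ)) ^ E * Q ^ p := by
        apply mul_le_mul_of_nonneg_right hfinal_arith (by positivity)
end
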